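/- arXiv:math/0101227 — 5 statements merged into one kernel-verified Lean document; each statement's English description precedes it below -/
import Mathlib

section
/- Let ν > 2 and suppose sup_{n≥1} μ[n,∞)^{(ν−2)/ν} · Σ_{j=0}^{n-1} 1/(μ_j b_j) < ∞. Then the Nash inequality holds: there exists η > 0 such that Var_π(f)^{1+2/ν} ≤ η^{-1} D(f) · (Σ_i π_i |f_i|)^{4/ν} for all f : ℤ₊ → ℝ with Σ_i π_i |f_i| < ∞. -/
open MeasureTheory Set Real
open Finset

private lemma sum_swap_lt {M : Type*} [AddCommMonoid M] (F : ℕ → ℕ → M) (n : ℕ) :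
    ∑ i ∈ range n, ∑ k ∈ range i, F i k = ∑ k ∈ range n, ∑ i ∈ Ico (k+1) n, F i k := by
  induction n with
  | zero => simp
  | succ n ih =>
      rw [Finset.sum_range_succ, ih, Finset.sum_range_succ]
      have : ∀ k ∈ range n, ∑ i ∈ Ico (k+1) (n+1), F i k
          = ∑ i ∈ Ico (k+1) n, F i k + F n k := by
        intro k hk
        have hk := Finset.mem_range.mp hk
        rw [Finset.sum_Ico_succ_top (by omega : k+1 ≤ n)]
      rw [Finset.sum_congr rfl this, Finset.sum_add_distrib]
      simp [Finset.sum_Ico_eq_sum_range]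

private lemma sum_Ico_telescope (g : ℕ → ℝ) {m n : ℕ} (h : m ≤ n) :
    ∑ i ∈ Ico m n, (g i - g (i+1)) = g m - g n := by
  induction n with
  | zero => interval_cases m; simp
  | succ n ih =>
      rcases Nat.eq_or_lt_of_le h with rfl | h'
      · simp
      · rw [Finset.sum_Ico_succ_top (by omega), ih (by omega)]; ring

/-- key elementary inequality: for `0 ≤ y`, `0 ≤ c`, `x = c + y`,
`c / √x ≤ 2 * (√x - √y)`. -/
private lemma div_sqrt_le (c y : ℝ) (hc : 0 ≤ c) (hy : 0 ≤ y) :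
    c / Real.sqrt (c + y) ≤ 2 * (Real.sqrt (c + y) - Real.sqrt y) := by
  have hx : (0:ℝ) ≤ c + y := by linarith
  rcases eq_or_lt_of_le hx with h0 | hxpos
  · have hc0 : c = 0 := by nlinarith
    simp [hc0]
  · rw [div_le_iff₀ (Real.sqrt_pos.mpr hxpos)]
    have h1 : Real.sqrt y * Real.sqrt (c+y) ≤ (y + (c+y))/2 := by
      have := Real.sqrt_mul_self hy
      have h2 : Real.sqrt y * Real.sqrt (c+y) = Real.sqrt (y * (c+y)) := by
        rw [Real.sqrt_mul hy]
      rw [h2]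
      have := Real.sqrt_le_sqrt (show y * (c+y) ≤ ((y + (c+y))/2)^2 by nlinarith [sq_nonneg (y - (c+y))])
      calc Real.sqrt (y * (c+y)) ≤ Real.sqrt (((y + (c+y))/2)^2) := this
        _ = (y + (c+y))/2 := Real.sqrt_sq (by linarith)
    have h3 : Real.sqrt (c+y) * Real.sqrt (c+y) = c + y := Real.mul_self_sqrt hx
    nlinarith

/-- Hardy-type bound (Muckenhoupt criterion, uniform partial sum version). -/
private lemma hardy_partial (mu b : ℕ → ℝ) (hmu : ∀ i, 0 < mu i) (hb : ∀ i, 0 < b i)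
    (hmusum : Summable mu) (p B : ℝ) (hp : 1 < p) (hB : 1 ≤ B)
    (hcritp : ∀ n, 1 ≤ n →
      (∑' j, mu (n + j)) ^ p⁻¹ * (∑ k ∈ range n, (mu k * b k)⁻¹) ≤ B)
    (f : ℕ → ℝ) (hw : Summable (fun k => mu k * b k * (f (k+1) - f k)^2))
    (hDpos : 0 < ∑' k, mu k * b k * (f (k+1) - f k)^2) :
    ∀ n, ∑ i ∈ range n, mu i * |f i - f 0| ^ (2*p) ≤
      2^(p+1) * B^p * (∑' k, mu k * b k * (f (k+1) - f k)^2)^p := by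
  intro n
  set w : ℕ → ℝ := fun k => mu k * b k * (f (k+1) - f k)^2 with hwdef
  set Dt : ℝ := ∑' k, w k with hDt
  set d : ℕ → ℝ := fun k => |f (k+1) - f k| with hddef
  set aa : ℕ → ℝ := fun k => (mu k * b k)⁻¹ with haadef
  set A : ℕ → ℝ := fun m => ∑ k ∈ range m, aa k with hAdef
  set t : ℕ → ℝ := fun m => ∑' j, mu (m + j) with htdef
  set G : ℕ → ℝ := fun i => ∑ k ∈ range i, d k with hGdef
  have hp0 : (0:ℝ) < p := by linarith
  have hBpos : (0:ℝ) < B := by linarith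
  have hw0 : ∀ k, 0 ≤ w k := fun k =>
    mul_nonneg (mul_nonneg (hmu k).le (hb k).le) (sq_nonneg _)
  have haapos : ∀ k, 0 < aa k := fun k => by
    simp only [haadef]; exact inv_pos.mpr (mul_pos (hmu k) (hb k))
  have hd0 : ∀ k, 0 ≤ d k := fun k => abs_nonneg _
  have hG0 : ∀ i, 0 ≤ G i := fun i => Finset.sum_nonneg (fun k _ => hd0 k)
  have hA0 : ∀ m, 0 ≤ A m := fun m => Finset.sum_nonneg (fun k _ => (haapos k).le)
  have hArec : ∀ k, A (k+1) = A k + aa k := fun k => Finset.sum_range_succ aa k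
  have hApos : ∀ m, 1 ≤ m → 0 < A m := by
    intro m hm
    have h1 : 0 < A 1 := by
      have e : A 1 = aa 0 := Finset.sum_range_one (f := aa)
      rw [e]; exact haapos 0
    have : A 1 ≤ A m :=
      Finset.sum_le_sum_of_subset_of_nonneg
        (Finset.range_subset_range.mpr hm) (fun k _ _ => (haapos k).le)
    linarith
  have htsum : ∀ m, Summable (fun j => mu (m + j)) := by
    intro m
    have := (summable_nat_add_iff m).2 hmusum
    simpa [add_comm] using this
  have htpos : ∀ m, 0 < t m := fun m =>
    Summable.tsum_pos (htsum m) (fun j => (hmu _).le) 0 (hmu _)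
  have htrec0 : ∀ m, (∑' j, mu (m+j)) = mu m + (∑' j, mu ((m+1)+j)) := by
    intro m
    have h := Summable.tsum_eq_zero_add (htsum m)
    rw [h, add_zero]
    congr 1
    exact tsum_congr (fun j => congrArg mu (by omega))
  have htrec : ∀ m, t m = mu m + t (m+1) := by
    intro m
    simp only [htdef]
    exact htrec0 m
  have hWle : ∀ i, ∑ k ∈ range i, w k ≤ Dt := fun i =>
    Summable.sum_le_tsum _ (fun k _ => hw0 k) hw
  have hDt0 : 0 ≤ Dt := hDpos.le
  have tele_t : ∀ m n', 1 ≤ m →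
      ∑ i ∈ Ico m n', mu i / Real.sqrt (t i) ≤ 2 * Real.sqrt (t m) := by
    intro m n' hm
    rcases le_or_gt m n' with h | h
    · have termwise : ∀ i, mu i / Real.sqrt (t i) ≤
          2 * (Real.sqrt (t i) - Real.sqrt (t (i+1))) := by
        intro i
        have := div_sqrt_le (mu i) (t (i+1)) (hmu i).le (htpos (i+1)).le
        rw [htrec i]
        exact this
      calc ∑ i ∈ Ico m n', mu i / Real.sqrt (t i)
          ≤ ∑ i ∈ Ico m n', 2*(Real.sqrt (t i) - Real.sqrt (t (i+1))) :=
            Finset.sum_le_sum (fun i _ => termwise i)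
        _ = 2*(Real.sqrt (t m) - Real.sqrt (t n')) := by
            rw [← Finset.mul_sum, sum_Ico_telescope (fun i => Real.sqrt (t i)) h]
        _ ≤ 2 * Real.sqrt (t m) := by nlinarith [Real.sqrt_nonneg (t n')]
    · rw [Finset.Ico_eq_empty (by omega)]
      simp [Real.sqrt_nonneg]
  have tele_A : ∀ i, ∑ k ∈ range i, aa k / Real.sqrt (A (k+1)) ≤ 2 * Real.sqrt (A i) := by
    intro i
    have termwise : ∀ k, aa k / Real.sqrt (A (k+1)) ≤
        2 * (Real.sqrt (A (k+1)) - Real.sqrt (A k)) := by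
      intro k
      have h := div_sqrt_le (aa k) (A k) (haapos k).le (hA0 k)
      rw [add_comm (aa k) (A k)] at h
      rw [hArec k]
      exact h
    calc ∑ k ∈ range i, aa k / Real.sqrt (A (k+1))
        ≤ ∑ k ∈ range i, (2 * Real.sqrt (A (k+1)) - 2 * Real.sqrt (A k)) := by
          refine Finset.sum_le_sum (fun k _ => ?_)
          have := termwise k; linarith
      _ = 2 * Real.sqrt (A i) - 2 * Real.sqrt (A 0) :=
          Finset.sum_range_sub (fun k => 2 * Real.sqrt (A k)) i
      _ ≤ 2 * Real.sqrt (A i) := by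
          have e : A 0 = 0 := Finset.sum_range_zero (f := aa)
          rw [e, Real.sqrt_zero]
          simp
  have K1 : ∀ i, G i ^ 2 ≤ (∑ k ∈ range i, w k * Real.sqrt (A (k+1))) * (2 * Real.sqrt (A i)) := by
    intro i
    have hsq : ∀ k ∈ range i, d k ^ 2 =
        (w k * Real.sqrt (A (k+1))) * (aa k / Real.sqrt (A (k+1))) := by
      intro k _
      have hApos' : (0:ℝ) < Real.sqrt (A (k+1)) :=
        Real.sqrt_pos.mpr (hApos (k+1) (by omega))
      have hmb : mu k * b k ≠ 0 := (mul_pos (hmu k) (hb k)).ne'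
      have hds : d k ^ 2 = (f (k+1) - f k)^2 := sq_abs _
      rw [hds]
      simp only [hwdef, haadef]
      field_simp [(hmu k).ne', (hb k).ne']
    have CS := Finset.sum_sq_le_sum_mul_sum_of_sq_eq_mul (range i)
      (r := d) (f := fun k => w k * Real.sqrt (A (k+1)))
      (g := fun k => aa k / Real.sqrt (A (k+1)))
      (fun k _ => mul_nonneg (hw0 k) (Real.sqrt_nonneg _))
      (fun k _ => div_nonneg (haapos k).le (Real.sqrt_nonneg _)) hsq
    refine le_trans CS ?_
    exact mul_le_mul_of_nonneg_left (tele_A i)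
      (Finset.sum_nonneg (fun k _ => mul_nonneg (hw0 k) (Real.sqrt_nonneg _)))
  have key_i : ∀ i, mu i * G i ^ (2*p) ≤
      2^p * Dt^(p-1) * (mu i * A i^(p/2) * ∑ k ∈ range i, w k * A (k+1) ^ (p/2)) := by
    intro i
    set Wi := ∑ k ∈ range i, w k * Real.sqrt (A (k+1)) with hWi
    set Ci := ∑ k ∈ range i, w k * A (k+1) ^ (p/2) with hCi
    have hWi0 : 0 ≤ Wi := Finset.sum_nonneg (fun k _ => mul_nonneg (hw0 k) (Real.sqrt_nonneg _))
    have hCi0 : 0 ≤ Ci := Finset.sum_nonneg (fun k _ =>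
      mul_nonneg (hw0 k) (Real.rpow_nonneg (hA0 _) _))
    have hSw0 : 0 ≤ ∑ k ∈ range i, w k := Finset.sum_nonneg (fun k _ => hw0 k)
    have hold : Wi ≤ (∑ k ∈ range i, w k)^(1-p⁻¹) * Ci^(p⁻¹) := by
      have h := Real.inner_le_weight_mul_Lp_of_nonneg (range i) hp.le w
        (fun k => Real.sqrt (A (k+1))) hw0 (fun k => Real.sqrt_nonneg _)
      have heq : ∀ k ∈ range i, w k * Real.sqrt (A (k+1)) ^ p = w k * A (k+1) ^ (p/2) := by
        intro k _
        rw [Real.sqrt_eq_rpow, ← Real.rpow_mul (hA0 (k+1)),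
          show (1/2)*p = p/2 by ring]
      rwa [Finset.sum_congr rfl heq] at h
    have hG2 : G i ^ (2*p) ≤ (Wi * (2*Real.sqrt (A i)))^p := by
      have h1 : G i ^ (2*p) = (G i ^ (2:ℕ)) ^ p := by
        rw [← Real.rpow_natCast (G i) 2, ← Real.rpow_mul (hG0 i)]
        norm_num
      rw [h1]
      exact Real.rpow_le_rpow (sq_nonneg _) (K1 i) hp0.le
    have hRp : (Wi * (2*Real.sqrt (A i)))^p = Wi^p * (2^p * A i^(p/2)) := by
      rw [Real.mul_rpow hWi0 (by positivity),
        Real.mul_rpow (by norm_num : (0:ℝ) ≤ 2) (Real.sqrt_nonneg _),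
        Real.sqrt_eq_rpow, ← Real.rpow_mul (hA0 i), show (1/2)*p = p/2 by ring]
    have hWp : Wi^p ≤ Dt^(p-1) * Ci := by
      calc Wi^p ≤ ((∑ k ∈ range i, w k)^(1-p⁻¹) * Ci^(p⁻¹))^p :=
            Real.rpow_le_rpow hWi0 hold hp0.le
        _ = (∑ k ∈ range i, w k)^((1-p⁻¹)*p) * Ci^(p⁻¹*p) := by
            rw [Real.mul_rpow (Real.rpow_nonneg hSw0 _) (Real.rpow_nonneg hCi0 _),
              ← Real.rpow_mul hSw0, ← Real.rpow_mul hCi0]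
        _ = (∑ k ∈ range i, w k)^(p-1) * Ci := by
            rw [show (1-p⁻¹)*p = p-1 by field_simp,
              show p⁻¹*p = 1 by field_simp, Real.rpow_one]
        _ ≤ Dt^(p-1) * Ci := by
            have h2 : (∑ k ∈ range i, w k)^(p-1) ≤ Dt^(p-1) :=
              Real.rpow_le_rpow hSw0 (hWle i) (by linarith)
            exact mul_le_mul_of_nonneg_right h2 hCi0
    calc mu i * G i ^ (2*p) ≤ mu i * (Wi^p * (2^p * A i^(p/2))) := by
          rw [← hRp]
          exact mul_le_mul_of_nonneg_left hG2 (hmu i).le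
      _ ≤ mu i * ((Dt^(p-1) * Ci) * (2^p * A i^(p/2))) := by
          refine mul_le_mul_of_nonneg_left ?_ (hmu i).le
          refine mul_le_mul_of_nonneg_right hWp ?_
          exact mul_nonneg (Real.rpow_nonneg (by norm_num) _) (Real.rpow_nonneg (hA0 i) _)
      _ = 2^p * Dt^(p-1) * (mu i * A i^(p/2) * Ci) := by ring
  have key5 : ∀ m, 1 ≤ m → A m ^ (p/2) * Real.sqrt (t m) ≤ B^(p/2) := by
    intro m hm
    have h := hcritp m hm
    rw [show (∑ k ∈ range m, (mu k * b k)⁻¹) = A m from rfl] at h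
    have h0 : (0:ℝ) ≤ t m ^ p⁻¹ * A m :=
      mul_nonneg (Real.rpow_nonneg (htpos m).le _) (hA0 m)
    have h2 := Real.rpow_le_rpow h0 h (by positivity : (0:ℝ) ≤ p/2)
    rw [Real.mul_rpow (Real.rpow_nonneg (htpos m).le _) (hA0 m),
      ← Real.rpow_mul (htpos m).le,
      show p⁻¹*(p/2) = 1/2 by field_simp] at h2
    rw [Real.sqrt_eq_rpow]
    calc A m ^ (p/2) * t m ^ ((1:ℝ)/2) = t m ^ ((1:ℝ)/2) * A m ^ (p/2) := by ring
      _ ≤ B^(p/2) := h2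
  have key5A : ∀ m, 1 ≤ m → mu m * A m ^(p/2) ≤ B^(p/2) * (mu m / Real.sqrt (t m)) := by
    intro m hm
    have hst : (0:ℝ) < Real.sqrt (t m) := Real.sqrt_pos.mpr (htpos m)
    have hA' : A m ^ (p/2) ≤ B^(p/2) / Real.sqrt (t m) :=
      (le_div_iff₀ hst).mpr (key5 m hm)
    calc mu m * A m ^(p/2) ≤ mu m * (B^(p/2) / Real.sqrt (t m)) :=
          mul_le_mul_of_nonneg_left hA' (hmu m).le
      _ = B^(p/2) * (mu m / Real.sqrt (t m)) := by ring
  have tri : ∀ i, |f i - f 0| ≤ G i := by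
    intro i
    induction i with
    | zero => simp [hGdef]
    | succ i ih =>
        have : |f (i+1) - f 0| ≤ |f (i+1) - f i| + |f i - f 0| := by
          have := abs_sub_le (f (i+1)) (f i) (f 0)
          linarith
        have hGs : G (i+1) = G i + d i := Finset.sum_range_succ d i
        rw [hGs]
        simp only [hddef]
        linarith
  have inner : ∀ k, ∑ i ∈ Ico (k+1) n, mu i * A i ^(p/2) ≤ B^(p/2) * (2*Real.sqrt (t (k+1))) := by
    intro k
    calc ∑ i ∈ Ico (k+1) n, mu i * A i ^(p/2)
        ≤ ∑ i ∈ Ico (k+1) n, B^(p/2) * (mu i / Real.sqrt (t i)) := by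
          refine Finset.sum_le_sum (fun i hi => ?_)
          have hi1 : 1 ≤ i := by
            have := (Finset.mem_Ico.mp hi).1; omega
          exact key5A i hi1
      _ = B^(p/2) * ∑ i ∈ Ico (k+1) n, mu i / Real.sqrt (t i) := by
          rw [Finset.mul_sum]
      _ ≤ B^(p/2) * (2*Real.sqrt (t (k+1))) := by
          refine mul_le_mul_of_nonneg_left (tele_t (k+1) n (by omega)) ?_
          exact Real.rpow_nonneg hBpos.le _
  calc ∑ i ∈ range n, mu i * |f i - f 0| ^ (2*p)
      ≤ ∑ i ∈ range n, mu i * G i ^ (2*p) := by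
        refine Finset.sum_le_sum (fun i _ => ?_)
        exact mul_le_mul_of_nonneg_left
          (Real.rpow_le_rpow (abs_nonneg _) (tri i) (by positivity)) (hmu i).le
    _ ≤ ∑ i ∈ range n, 2^p * Dt^(p-1) * (mu i * A i^(p/2) * ∑ k ∈ range i, w k * A (k+1) ^ (p/2)) :=
        Finset.sum_le_sum (fun i _ => key_i i)
    _ = ∑ i ∈ range n, 2^p * Dt^(p-1) * ∑ k ∈ range i,
          (mu i * A i^(p/2)) * (w k * A (k+1) ^ (p/2)) :=
        Finset.sum_congr rfl (fun i _ => by rw [Finset.mul_sum])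
    _ = 2^p * Dt^(p-1) * ∑ i ∈ range n, ∑ k ∈ range i,
          (mu i * A i^(p/2)) * (w k * A (k+1) ^ (p/2)) := by
        rw [Finset.mul_sum]
    _ = 2^p * Dt^(p-1) * ∑ k ∈ range n, ∑ i ∈ Ico (k+1) n,
          (mu i * A i^(p/2)) * (w k * A (k+1) ^ (p/2)) := by
        rw [sum_swap_lt]
    _ ≤ 2^p * Dt^(p-1) * ∑ k ∈ range n, 2 * B^p * w k := by
        refine mul_le_mul_of_nonneg_left (Finset.sum_le_sum (fun k _ => ?_)) ?_
        · have hck0 : 0 ≤ w k * A (k+1) ^ (p/2) :=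
            mul_nonneg (hw0 k) (Real.rpow_nonneg (hA0 _) _)
          calc ∑ i ∈ Ico (k+1) n, (mu i * A i^(p/2)) * (w k * A (k+1) ^ (p/2))
              = (∑ i ∈ Ico (k+1) n, mu i * A i^(p/2)) * (w k * A (k+1) ^ (p/2)) := by
                rw [Finset.sum_mul]
            _ ≤ (B^(p/2) * (2*Real.sqrt (t (k+1)))) * (w k * A (k+1) ^ (p/2)) := by
                refine mul_le_mul_of_nonneg_right (inner k) hck0
            _ = 2 * w k * (B^(p/2) * (A (k+1) ^ (p/2) * Real.sqrt (t (k+1)))) := by ring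
            _ ≤ 2 * w k * (B^(p/2) * B^(p/2)) := by
                refine mul_le_mul_of_nonneg_left
                  (mul_le_mul_of_nonneg_left (key5 (k+1) (by omega)) (Real.rpow_nonneg hBpos.le _))
                  (by have := hw0 k; linarith)
            _ = 2 * B^p * w k := by
                rw [← Real.rpow_add hBpos, show p/2+p/2 = p by ring]
                ring
        · exact mul_nonneg (Real.rpow_nonneg (by norm_num) _) (Real.rpow_nonneg hDt0 _)
    _ ≤ 2^p * Dt^(p-1) * (2 * B^p * Dt) := by
        refine mul_le_mul_of_nonneg_left ?_
          (mul_nonneg (Real.rpow_nonneg (by norm_num) _) (Real.rpow_nonneg hDt0 _))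
        rw [← Finset.mul_sum]
        refine mul_le_mul_of_nonneg_left (hWle n) (by positivity)
    _ = 2^(p+1) * B^p * Dt^p := by
        have e1 : (2:ℝ)^(p+1) = 2^p*2 := Real.rpow_add_one (by norm_num) p
        have e2 : Dt^p = Dt^(p-1)*Dt := by
          rw [← Real.rpow_add_one hDpos.ne' (p-1)]
          norm_num
        rw [e1, e2]
        ring

private lemma real_add_rpow_le {x y r : ℝ} (hx : 0 ≤ x) (hy : 0 ≤ y) (hr : 1 ≤ r) :
    (x + y) ^ r ≤ 2 ^ (r - 1) * (x ^ r + y ^ r) := by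
  lift x to NNReal using hx
  lift y to NNReal using hy
  have h := NNReal.rpow_add_le_mul_rpow_add_rpow x y hr
  exact_mod_cast h

set_option maxHeartbeats 1000000 in
/-- Mao (2000c): sufficient condition for the Nash inequality for a birth-death
process. If `ν > 2` and `sup_{n≥1} μ[n,∞)^{(ν-2)/ν} Σ_{j<n} (μⱼbⱼ)⁻¹ < ∞`, then
there is `η > 0` with `Var_π(f)^{1+2/ν} ≤ η⁻¹ D(f) (Σᵢ πᵢ|fᵢ|)^{4/ν}`. -/
theorem nash_inequality_birth_death
    (b a : ℕ → ℝ) (hb : ∀ i, 0 < b i) (ha : ∀ i, 0 < a (i + 1))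
    (mu : ℕ → ℝ) (hmu0 : mu 0 = 1)
    (hmurec : ∀ n, mu (n + 1) = mu n * b n / a (n + 1))
    (hmusum : Summable mu)
    (Z : ℝ) (hZ : Z = ∑' n, mu n)
    (pi : ℕ → ℝ) (hpi : ∀ i, pi i = mu i / Z)
    (ν : ℝ) (hν : 2 < ν)
    (hcrit : BddAbove (Set.range fun n : ℕ =>
      (∑' j : ℕ, mu (n + 1 + j)) ^ ((ν - 2) / ν) *
        ∑ j ∈ Finset.range (n + 1), (mu j * b j)⁻¹)) :
    ∃ η : ℝ, 0 < η ∧ ∀ f : ℕ → ℝ,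
      Summable (fun i => pi i * |f i|) →
      Summable (fun i => pi i * b i * (f (i + 1) - f i) ^ 2) →
      ((∑' i, pi i * f i ^ 2) - (∑' i, pi i * f i) ^ 2) ^ (1 + 2 / ν) ≤
        η⁻¹ * (∑' i, pi i * b i * (f (i + 1) - f i) ^ 2) *
          (∑' i, pi i * |f i|) ^ (4 / ν) := by
  have hν0 : (0:ℝ) < ν := by linarith
  have hν2 : (0:ℝ) < ν - 2 := by linarith
  have hmupos : ∀ i, 0 < mu i := by
    intro i
    induction i with
    | zero => rw [hmu0]; norm_num
    | succ n ih => rw [hmurec n]; exact div_pos (mul_pos ih (hb n)) (ha n)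
  have hZpos : 0 < Z := by
    rw [hZ]; exact Summable.tsum_pos hmusum (fun i => (hmupos i).le) 0 (hmupos 0)
  have hpipos : ∀ i, 0 < pi i := fun i => by
    rw [hpi]; exact div_pos (hmupos i) hZpos
  have hpisummable : Summable pi := by
    refine (hmusum.mul_right Z⁻¹).congr (fun i => ?_)
    rw [hpi, div_eq_mul_inv]
  have hpisum1 : ∑' i, pi i = 1 := by
    have : ∑' i, pi i = (∑' i, mu i) / Z := by
      rw [← tsum_div_const]
      exact tsum_congr (fun i => by rw [hpi])
    rw [this, ← hZ, div_self hZpos.ne']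
  -- exponents
  set p : ℝ := ν / (ν - 2) with hpdef
  have hp1 : 1 < p := by
    rw [hpdef, lt_div_iff₀ hν2]; linarith
  have hp0 : (0:ℝ) < p := by linarith
  -- the constant B
  obtain ⟨B0, hB0⟩ := hcrit
  set B : ℝ := max B0 1 with hBdef
  have hB1 : 1 ≤ B := le_max_right _ _
  have hBpos : 0 < B := by linarith
  have hcritp : ∀ n, 1 ≤ n →
      (∑' j, mu (n + j)) ^ p⁻¹ * (∑ k ∈ Finset.range n, (mu k * b k)⁻¹) ≤ B := by
    intro n hn
    obtain ⟨m, rfl⟩ : ∃ m, n = m + 1 := ⟨n - 1, by omega⟩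
    have h := hB0 (Set.mem_range_self m)
    have hee : (ν - 2)/ν = p⁻¹ := by
      rw [hpdef]; field_simp
    rw [hee] at h
    exact le_trans h (le_max_left _ _)
  -- the constant η
  set K0 : ℝ := 2^(2*p+1) * 2^(p+1) * B^p * Z^(p-1) with hK0def
  have hK0pos : 0 < K0 := by
    have h1 : (0:ℝ) < 2^(2*p+1) := Real.rpow_pos_of_pos (by norm_num) _
    have h2 : (0:ℝ) < 2^(p+1) := Real.rpow_pos_of_pos (by norm_num) _
    have h3 : (0:ℝ) < B^p := Real.rpow_pos_of_pos hBpos _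
    have h4 : (0:ℝ) < Z^(p-1) := Real.rpow_pos_of_pos hZpos _
    positivity
  set C : ℝ := K0^p⁻¹ * 4^(4/ν) with hCdef
  have hCpos : 0 < C := by
    have h1 : (0:ℝ) < K0^p⁻¹ := Real.rpow_pos_of_pos hK0pos _
    have h2 : (0:ℝ) < 4^(4/ν) := Real.rpow_pos_of_pos (by norm_num) _
    positivity
  refine ⟨C⁻¹, inv_pos.mpr hCpos, ?_⟩
  intro f hS hD
  rw [inv_inv]
  set S := ∑' i, pi i * |f i| with hSdef
  set Dp := ∑' i, pi i * b i * (f (i+1) - f i)^2 with hDpdef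
  have hS0 : 0 ≤ S :=
    tsum_nonneg (fun i => mul_nonneg (hpipos i).le (abs_nonneg _))
  have hDp0 : 0 ≤ Dp :=
    tsum_nonneg (fun i => mul_nonneg (mul_nonneg (hpipos i).le (hb i).le) (sq_nonneg _))
  have hRHS0 : 0 ≤ C * Dp * S ^ (4/ν) :=
    mul_nonneg (mul_nonneg hCpos.le hDp0) (Real.rpow_nonneg hS0 _)
  by_cases hconst : ∀ i, f i = f 0
  · -- constant function: variance is zero
    have h2 : ∑' i, pi i * f i ^ 2 = f 0 ^ 2 := by
      have : ∀ i, pi i * f i ^ 2 = pi i * f 0 ^ 2 := fun i => by rw [hconst i]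
      rw [tsum_congr this, tsum_mul_right, hpisum1, one_mul]
    have h1 : ∑' i, pi i * f i = f 0 := by
      have : ∀ i, pi i * f i = pi i * f 0 := fun i => by rw [hconst i]
      rw [tsum_congr this, tsum_mul_right, hpisum1, one_mul]
    rw [h1, h2, sub_self, Real.zero_rpow (by positivity)]
    exact hRHS0
  · -- main case
    obtain ⟨i0, hi0⟩ := not_forall.mp hconst
    have hw : Summable (fun k => mu k * b k * (f (k+1) - f k)^2) := by
      refine (hD.mul_left Z).congr (fun k => ?_)
      rw [hpi]
      field_simp
    set Dt := ∑' k, mu k * b k * (f (k+1) - f k)^2 with hDtdef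
    have hDtZ : Dt = Z * Dp := by
      rw [hDtdef, hDpdef, ← tsum_mul_left]
      refine tsum_congr (fun k => ?_)
      rw [hpi]
      field_simp
    have hdelta : ∃ k, f (k+1) ≠ f k := by
      by_contra hcon
      push_neg at hcon
      apply hi0
      clear hi0
      induction i0 with
      | zero => rfl
      | succ n ih => rw [hcon n, ih]
    obtain ⟨k0, hk0⟩ := hdelta
    have hDtpos : 0 < Dt := by
      refine Summable.tsum_pos hw (fun k => mul_nonneg (mul_nonneg (hmupos k).le (hb k).le) (sq_nonneg _)) k0 ?_
      have : (f (k0+1) - f k0)^2 > 0 := by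
        have := sub_ne_zero.mpr hk0
        positivity
      exact mul_pos (mul_pos (hmupos k0) (hb k0)) this
    have hDppos : 0 < Dp := by
      nlinarith
    -- Hardy inequality
    have hard := hardy_partial mu b hmupos hb hmusum p B hp1 hB1 hcritp f hw hDtpos
    rw [← hDtdef] at hard
    have hT0 : ∀ i, 0 ≤ mu i * |f i - f 0| ^ (2*p) :=
      fun i => mul_nonneg (hmupos i).le (Real.rpow_nonneg (abs_nonneg _) _)
    have hTsummable : Summable (fun i => mu i * |f i - f 0| ^ (2*p)) :=
      summable_of_sum_range_le hT0 hard
    have hT : ∑' i, mu i * |f i - f 0| ^ (2*p) ≤ 2^(p+1) * B^p * Dt^p :=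
      Summable.tsum_le_of_sum_range_le hTsummable hard
    have hUsummable : Summable (fun i => pi i * |f i - f 0| ^ (2*p)) := by
      refine (hTsummable.mul_left Z⁻¹).congr (fun i => ?_)
      rw [hpi]
      ring
    set U := ∑' i, pi i * |f i - f 0|^(2*p) with hUdef
    have hU0le : ∀ i, 0 ≤ pi i * |f i - f 0|^(2*p) :=
      fun i => mul_nonneg (hpipos i).le (Real.rpow_nonneg (abs_nonneg _) _)
    have hUbound : U ≤ Z⁻¹ * (2^(p+1) * B^p * Dt^p) := by
      have e : U = Z⁻¹ * ∑' i, mu i * |f i - f 0| ^ (2*p) := by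
        rw [hUdef, ← tsum_mul_left]
        refine tsum_congr (fun i => ?_)
        rw [hpi]
        ring
      rw [e]
      exact mul_le_mul_of_nonneg_left hT (inv_nonneg.mpr hZpos.le)
    have hUpos : 0 < U := by
      refine Summable.tsum_pos hUsummable hU0le i0 ?_
      have habs : 0 < |f i0 - f 0| := abs_pos.mpr (sub_ne_zero.mpr hi0)
      exact mul_pos (hpipos i0) (Real.rpow_pos_of_pos habs _)
    have hSpos : 0 < S := by
      have hj : ∃ j, f j ≠ 0 := by
        rcases eq_or_ne (f 0) 0 with h0 | h0
        · exact ⟨i0, by rw [h0] at hi0; exact hi0⟩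
        · exact ⟨0, h0⟩
      obtain ⟨j, hj⟩ := hj
      have hle : pi j * |f j| ≤ S :=
        Summable.le_tsum hS j (fun k _ => mul_nonneg (hpipos k).le (abs_nonneg _))
      have : 0 < pi j * |f j| := mul_pos (hpipos j) (abs_pos.mpr hj)
      linarith
    -- Markov-type selection of reference point N
    obtain ⟨N, hN1, hN2⟩ : ∃ N, |f N| ≤ 3*S ∧ |f N - f 0|^(2*p) ≤ 3*U := by
      by_contra hcon
      push_neg at hcon
      have hterm : ∀ N, pi N ≤ pi N * |f N|/(3*S) + pi N * |f N - f 0|^(2*p)/(3*U) := by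
        intro N
        have ht1 : 0 ≤ pi N * |f N|/(3*S) :=
          div_nonneg (mul_nonneg (hpipos N).le (abs_nonneg _)) (by linarith)
        have ht2 : 0 ≤ pi N * |f N - f 0|^(2*p)/(3*U) :=
          div_nonneg (hU0le N) (by linarith)
        rcases le_or_gt (|f N|) (3*S) with h | h
        · have h2 := (hcon N h).le
          have : pi N ≤ pi N * |f N - f 0|^(2*p)/(3*U) := by
            rw [le_div_iff₀ (by linarith : (0:ℝ) < 3*U)]
            exact mul_le_mul_of_nonneg_left h2 (hpipos N).le
          linarith
        · have : pi N ≤ pi N * |f N|/(3*S) := by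
            rw [le_div_iff₀ (by linarith : (0:ℝ) < 3*S)]
            exact mul_le_mul_of_nonneg_left h.le (hpipos N).le
          linarith
      have hsum1 : Summable (fun N => pi N * |f N|/(3*S)) := hS.div_const _
      have hsum2 : Summable (fun N => pi N * |f N - f 0|^(2*p)/(3*U)) :=
        hUsummable.div_const _
      have hle := Summable.tsum_le_tsum hterm hpisummable (hsum1.add hsum2)
      rw [Summable.tsum_add hsum1 hsum2, tsum_div_const, tsum_div_const, hpisum1,
        ← hSdef, ← hUdef] at hle
      have e1 : S/(3*S) = 1/3 := by
        rw [div_eq_iff (by linarith : (0:ℝ) < 3*S).ne']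
        ring
      have e2 : U/(3*U) = 1/3 := by
        rw [div_eq_iff (by linarith : (0:ℝ) < 3*U).ne']
        ring
      rw [e1, e2] at hle
      norm_num at hle
    -- interpolation setup
    set g : ℕ → ℝ := fun i => |f i - f N| with hgdef
    have hg0 : ∀ i, 0 ≤ g i := fun i => abs_nonneg _
    set r : ℝ := (ν+2)/(ν-2) with hrdef
    set r' : ℝ := (ν+2)/4 with hr'def
    have hrconj : r.HolderConjugate r' := by
      rw [Real.holderConjugate_iff]; constructor
      · rw [hrdef, lt_div_iff₀ hν2]; linarith
      · rw [hrdef, hr'def]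
        rw [inv_div, inv_div]
        rw [← add_div, div_eq_one_iff_eq (by linarith : ν + 2 ≠ 0)]
        ring
    set eF : ℝ := 2*ν/(ν+2) with heFdef
    set eG : ℝ := 4/(ν+2) with heGdef
    set F : ℕ → ℝ := fun i => pi i ^ r⁻¹ * g i ^ eF with hFdef
    set G : ℕ → ℝ := fun i => pi i ^ r'⁻¹ * g i ^ eG with hGdef
    have hF0 : ∀ i, 0 ≤ F i := fun i =>
      mul_nonneg (Real.rpow_nonneg (hpipos i).le _) (Real.rpow_nonneg (hg0 i) _)
    have hG0 : ∀ i, 0 ≤ G i := fun i =>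
      mul_nonneg (Real.rpow_nonneg (hpipos i).le _) (Real.rpow_nonneg (hg0 i) _)
    have hr0 : r ≠ 0 := hrconj.ne_zero
    have hr'0 : r' ≠ 0 := hrconj.symm.ne_zero
    have hFr : ∀ i, F i ^ r = pi i * g i ^ (2*p) := by
      intro i
      rw [hFdef]
      rw [Real.mul_rpow (Real.rpow_nonneg (hpipos i).le _) (Real.rpow_nonneg (hg0 i) _),
        ← Real.rpow_mul (hpipos i).le, ← Real.rpow_mul (hg0 i),
        inv_mul_cancel₀ hr0, Real.rpow_one,
        show eF * r = 2*p by
          rw [heFdef, hrdef, hpdef]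
          have h1 : ν + 2 ≠ 0 := by linarith
          have h2 : ν - 2 ≠ 0 := by linarith
          field_simp]
    have hGr : ∀ i, G i ^ r' = pi i * g i := by
      intro i
      rw [hGdef]
      rw [Real.mul_rpow (Real.rpow_nonneg (hpipos i).le _) (Real.rpow_nonneg (hg0 i) _),
        ← Real.rpow_mul (hpipos i).le, ← Real.rpow_mul (hg0 i),
        inv_mul_cancel₀ hr'0, Real.rpow_one,
        show eG * r' = 1 by
          rw [heGdef, hr'def]
          have h1 : ν + 2 ≠ 0 := by linarith
          field_simp,
        Real.rpow_one]
    have heFG2 : eF + eG = 2 := by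
      rw [heFdef, heGdef, ← add_div, div_eq_iff (by linarith : ν + 2 ≠ 0)]
      ring
    have heFGne : eF + eG ≠ 0 := by rw [heFG2]; norm_num
    have hFG : ∀ i, F i * G i = pi i * g i ^ (2:ℕ) := by
      intro i
      rw [hFdef, hGdef]
      rw [show pi i ^ r⁻¹ * g i ^ eF * (pi i ^ r'⁻¹ * g i ^ eG)
          = (pi i ^ r⁻¹ * pi i ^ r'⁻¹) * (g i ^ eF * g i ^ eG) by ring,
        ← Real.rpow_add (hpipos i), hrconj.inv_add_inv_eq_one, Real.rpow_one,
        ← Real.rpow_add' (hg0 i) heFGne, heFG2,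
        show ((2:ℝ)) = ((2:ℕ):ℝ) by norm_num, Real.rpow_natCast]
    -- bound on ∑ π g^(2p)
    have hgq_le : ∀ i, pi i * g i ^ (2*p) ≤
        2^(2*p-1) * (pi i * |f i - f 0|^(2*p)) + (2^(2*p-1) * (3*U)) * pi i := by
      intro i
      have tri : g i ≤ |f i - f 0| + |f 0 - f N| := by
        rw [hgdef]
        exact abs_sub_le _ _ _
      have h1 : g i ^ (2*p) ≤ (|f i - f 0| + |f 0 - f N|)^(2*p) :=
        Real.rpow_le_rpow (hg0 i) tri (by linarith)
      have h2 := real_add_rpow_le (abs_nonneg (f i - f 0)) (abs_nonneg (f 0 - f N))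
        (show (1:ℝ) ≤ 2*p by linarith)
      have h4 : |f 0 - f N| ^ (2*p) ≤ 3*U := by
        rw [abs_sub_comm]; exact hN2
      have hc0 : (0:ℝ) ≤ 2^(2*p-1) := Real.rpow_nonneg (by norm_num : (0:ℝ) ≤ 2) _
      have h5 : g i ^(2*p) ≤ 2^(2*p-1) * (|f i - f 0|^(2*p) + 3*U) := by
        refine le_trans h1 (le_trans h2 ?_)
        have := Real.rpow_nonneg (abs_nonneg (f i - f 0)) (2*p)
        nlinarith
      calc pi i * g i ^ (2*p) ≤ pi i * (2^(2*p-1) * (|f i - f 0|^(2*p) + 3*U)) :=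
            mul_le_mul_of_nonneg_left h5 (hpipos i).le
        _ = 2^(2*p-1) * (pi i * |f i - f 0|^(2*p)) + (2^(2*p-1) * (3*U)) * pi i := by ring
    have hgq_rhs_sum : Summable (fun i => 2^(2*p-1) * (pi i * |f i - f 0|^(2*p))
        + (2^(2*p-1) * (3*U)) * pi i) :=
      (hUsummable.mul_left _).add (hpisummable.mul_left _)
    have hgq_nonneg : ∀ i, 0 ≤ pi i * g i ^ (2*p) :=
      fun i => mul_nonneg (hpipos i).le (Real.rpow_nonneg (hg0 i) _)
    have hgq_sum : Summable (fun i => pi i * g i ^ (2*p)) :=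
      Summable.of_nonneg_of_le hgq_nonneg hgq_le hgq_rhs_sum
    have hPHQ : ∑' i, pi i * g i ^ (2*p) ≤ 2^(2*p+1) * U := by
      have hle := Summable.tsum_le_tsum hgq_le hgq_sum hgq_rhs_sum
      rw [Summable.tsum_add (hUsummable.mul_left _) (hpisummable.mul_left _),
        tsum_mul_left, tsum_mul_left, hpisum1, ← hUdef] at hle
      have e4 : (2:ℝ)^(2*p+1) = 2^(2*p-1) * 4 := by
        rw [show 2*p+1 = (2*p-1)+2 by ring, Real.rpow_add (by norm_num : (0:ℝ) < 2),
          show ((2:ℝ))^(2:ℝ) = 4 by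
            rw [show ((2:ℝ)) = ((2:ℕ):ℝ) by norm_num, Real.rpow_natCast]; norm_num]
      rw [e4]
      linarith
    -- bound on ∑ π g
    have hg1_le : ∀ i, pi i * g i ≤ pi i * |f i| + (3*S) * pi i := by
      intro i
      have tri : g i ≤ |f i| + |f N| := by
        rw [hgdef]
        exact abs_sub _ _
      have h1 : g i ≤ |f i| + 3*S := by
        have := hN1; linarith
      calc pi i * g i ≤ pi i * (|f i| + 3*S) := mul_le_mul_of_nonneg_left h1 (hpipos i).le
        _ = pi i * |f i| + (3*S) * pi i := by ring
    have hg1_nonneg : ∀ i, 0 ≤ pi i * g i := fun i => mul_nonneg (hpipos i).le (hg0 i)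
    have hg1_rhs_sum : Summable (fun i => pi i * |f i| + (3*S) * pi i) :=
      hS.add (hpisummable.mul_left _)
    have hg1_sum : Summable (fun i => pi i * g i) :=
      Summable.of_nonneg_of_le hg1_nonneg hg1_le hg1_rhs_sum
    have hPH1 : ∑' i, pi i * g i ≤ 4*S := by
      have hle := Summable.tsum_le_tsum hg1_le hg1_sum hg1_rhs_sum
      rw [Summable.tsum_add hS (hpisummable.mul_left _), tsum_mul_left, hpisum1, ← hSdef] at hle
      linarith
    -- Hoelder
    have hsumF : Summable (fun i => F i ^ r) := hgq_sum.congr (fun i => (hFr i).symm)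
    have hsumG : Summable (fun i => G i ^ r') := hg1_sum.congr (fun i => (hGr i).symm)
    obtain ⟨hFGsum, hFGle⟩ :=
      Real.summable_and_inner_le_Lp_mul_Lq_tsum_of_nonneg hrconj hF0 hG0 hsumF hsumG
    have hPH2sum : Summable (fun i => pi i * g i^(2:ℕ)) := hFGsum.congr hFG
    rw [tsum_congr hFG, tsum_congr hFr, tsum_congr hGr] at hFGle
    -- variance
    have hfsq_sum : Summable (fun i => pi i * f i ^ 2) := by
      refine Summable.of_nonneg_of_le (fun i => mul_nonneg (hpipos i).le (sq_nonneg _))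
        (fun i => ?_) ((hPH2sum.mul_left 2).add (hpisummable.mul_left (2 * f N^2)))
      have hsq : f i ^2 ≤ 2 * g i^2 + 2 * f N^2 := by
        have e : g i ^2 = (f i - f N)^2 := sq_abs _
        nlinarith [sq_nonneg (f i - 2 * f N)]
      calc pi i * f i^2 ≤ pi i * (2 * g i^2 + 2 * f N^2) :=
            mul_le_mul_of_nonneg_left hsq (hpipos i).le
        _ = 2 * (pi i * g i^(2:ℕ)) + (2 * f N^2) * pi i := by ring
    have hpf_sum : Summable (fun i => pi i * f i) := by
      refine Summable.of_abs (hS.congr (fun i => ?_))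
      rw [abs_mul, abs_of_pos (hpipos i)]
    set m := ∑' i, pi i * f i with hmdef
    have hident : ∀ c : ℝ, ∑' i, pi i * (f i - c)^2
        = (∑' i, pi i * f i ^2) - 2*c*m + c^2 := by
      intro c
      have e : ∀ i, pi i * (f i - c)^2
          = (pi i * f i^2 - (2*c)*(pi i * f i)) + c^2 * pi i := fun i => by ring
      rw [tsum_congr e,
        Summable.tsum_add (hfsq_sum.sub (hpf_sum.mul_left (2*c))) (hpisummable.mul_left (c^2)),
        Summable.tsum_sub hfsq_sum (hpf_sum.mul_left (2*c)), tsum_mul_left, tsum_mul_left,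
        hpisum1, ← hmdef]
      ring
    have hfc_sum : ∀ c : ℝ, Summable (fun i => pi i * (f i - c)^2) := by
      intro c
      refine ((hfsq_sum.sub (hpf_sum.mul_left (2*c))).add
        (hpisummable.mul_left (c^2))).congr (fun i => ?_)
      ring
    have hVar_nonneg : 0 ≤ (∑' i, pi i * f i ^2) - m^2 := by
      have h1 := hident m
      have h2 : 0 ≤ ∑' i, pi i * (f i - m)^2 :=
        tsum_nonneg (fun i => mul_nonneg (hpipos i).le (sq_nonneg _))
      rw [h1] at h2
      nlinarith
    have hVarle : (∑' i, pi i * f i ^2) - m^2 ≤ ∑' i, pi i * g i^(2:ℕ) := by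
      have h1 := hident (f N)
      have e : ∀ i, pi i * (f i - f N)^2 = pi i * g i^(2:ℕ) := fun i => by
        rw [hgdef]
        simp [sq_abs]
      rw [tsum_congr e] at h1
      rw [h1]
      nlinarith [sq_nonneg (m - f N)]
    -- full chain
    have hgq_tnonneg : 0 ≤ ∑' i, pi i * g i ^ (2*p) := tsum_nonneg hgq_nonneg
    have hg1_tnonneg : 0 ≤ ∑' i, pi i * g i := tsum_nonneg hg1_nonneg
    have hUc0 : (0:ℝ) ≤ 2^(2*p+1) * U :=
      mul_nonneg (Real.rpow_nonneg (by norm_num : (0:ℝ) ≤ 2) _) hUpos.le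
    have hchain : (∑' i, pi i * f i ^2) - m^2 ≤ (2^(2*p+1)*U)^(1/r) * (4*S)^(1/r') := by
      refine le_trans hVarle (le_trans hFGle ?_)
      refine mul_le_mul (Real.rpow_le_rpow hgq_tnonneg hPHQ (by positivity))
        (Real.rpow_le_rpow hg1_tnonneg hPH1 (by positivity))
        (Real.rpow_nonneg hg1_tnonneg _) (Real.rpow_nonneg hUc0 _)
    have hUK : 2^(2*p+1)*U ≤ K0 * Dp^p := by
      have step1 : 2^(2*p+1)*U ≤ 2^(2*p+1)*(Z⁻¹ * (2^(p+1) * B^p * Dt^p)) :=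
        mul_le_mul_of_nonneg_left hUbound (Real.rpow_nonneg (by norm_num : (0:ℝ) ≤ 2) _)
      refine le_trans step1 (le_of_eq ?_)
      rw [hDtZ, Real.mul_rpow hZpos.le hDp0, hK0def]
      have ez : Z^p = Z^(p-1) * Z := by
        rw [← Real.rpow_add_one hZpos.ne' (p-1)]
        norm_num
      rw [ez]
      field_simp
    have hfinal : ((∑' i, pi i * f i ^2) - m^2) ^ (1+2/ν) ≤ C * Dp * S^(4/ν) := by
      have hBase : (0:ℝ) ≤ (2^(2*p+1)*U)^(1/r) * (4*S)^(1/r') :=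
        mul_nonneg (Real.rpow_nonneg hUc0 _) (Real.rpow_nonneg (by linarith) _)
      calc ((∑' i, pi i * f i ^2) - m^2) ^ (1+2/ν)
          ≤ ((2^(2*p+1)*U)^(1/r) * (4*S)^(1/r'))^(1+2/ν) :=
            Real.rpow_le_rpow hVar_nonneg hchain (by positivity)
        _ = (2^(2*p+1)*U)^((1/r)*(1+2/ν)) * (4*S)^((1/r')*(1+2/ν)) := by
            rw [Real.mul_rpow (Real.rpow_nonneg hUc0 _) (Real.rpow_nonneg (by linarith) _),
              ← Real.rpow_mul hUc0, ← Real.rpow_mul (by linarith : (0:ℝ) ≤ 4*S)]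
        _ = (2^(2*p+1)*U)^(p⁻¹) * (4*S)^(4/ν) := by
            rw [show (1/r)*(1+2/ν) = p⁻¹ by
                rw [hrdef, hpdef]
                have h1 : ν + 2 ≠ 0 := by linarith
                have h2 : ν - 2 ≠ 0 := by linarith
                have h3 : ν ≠ 0 := by linarith
                field_simp,
              show (1/r')*(1+2/ν) = 4/ν by
                rw [hr'def]
                have h1 : ν + 2 ≠ 0 := by linarith
                have h3 : ν ≠ 0 := by linarith
                field_simp]
        _ ≤ (K0 * Dp^p)^(p⁻¹) * (4*S)^(4/ν) := by
            refine mul_le_mul_of_nonneg_right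
              (Real.rpow_le_rpow hUc0 hUK (by positivity))
              (Real.rpow_nonneg (by linarith) _)
        _ = K0^(p⁻¹) * Dp * (4^(4/ν) * S^(4/ν)) := by
            rw [Real.mul_rpow hK0pos.le (Real.rpow_nonneg hDp0 _),
              ← Real.rpow_mul hDp0, mul_inv_cancel₀ hp0.ne', Real.rpow_one,
              Real.mul_rpow (by norm_num : (0:ℝ) ≤ 4) hS0]
        _ = C * Dp * S^(4/ν) := by
            rw [hCdef]
            ring
    exact hfinal
end

section
/- (Kac–Krein) Let a be Borel measurable with a(x) > 0 on (0,∞) and set δ = sup_{x>0} x ∫_x^∞ a(u)^{-1} du; assume 0 < δ < ∞. Define λ₀ = inf { (∫_0^∞ f'(x)² dx) / (∫_0^∞ f(x)²/a(x) dx) : f absolutely continuous on [0,∞), f(0) = 0, 0 < ∫_0^∞ f²/a < ∞ }. Then (4δ)^{-1} ≤ λ₀ ≤ δ^{-1}. -/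
open MeasureTheory Set Real

open scoped ENNReal


lemma tail_lintegral_le
    (a : ℝ → ℝ) (ha : ∀ x > (0:ℝ), 0 < a x)
    (hInt : ∀ x > (0:ℝ), IntegrableOn (fun u => (a u)⁻¹) (Ioi x))
    (δ : ℝ)
    (htail : ∀ x > (0:ℝ), x * ∫ u in Ioi x, (a u)⁻¹ ≤ δ)
    {x : ℝ} (hx : 0 < x) :
    ∫⁻ u in Ioi x, ENNReal.ofReal (a u)⁻¹ ≤ ENNReal.ofReal (δ / x) := by
  have hnn : 0 ≤ᵐ[volume.restrict (Ioi x)] fun u => (a u)⁻¹ := by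
    filter_upwards [ae_restrict_mem measurableSet_Ioi] with u hu
    exact le_of_lt (inv_pos.2 (ha u (hx.trans hu)))
  rw [← MeasureTheory.ofReal_integral_eq_lintegral_ofReal (hInt x hx) hnn]
  apply ENNReal.ofReal_le_ofReal
  rw [le_div_iff₀ hx, mul_comm]
  exact htail x hx

-- Ici version
lemma tail_lintegral_le_Ici
    (a : ℝ → ℝ) (ha : ∀ x > (0:ℝ), 0 < a x)
    (hInt : ∀ x > (0:ℝ), IntegrableOn (fun u => (a u)⁻¹) (Ioi x))
    (δ : ℝ)
    (htail : ∀ x > (0:ℝ), x * ∫ u in Ioi x, (a u)⁻¹ ≤ δ)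
    {x : ℝ} (hx : 0 < x) :
    ∫⁻ u in Ici x, ENNReal.ofReal (a u)⁻¹ ≤ ENNReal.ofReal (δ / x) := by
  rw [Measure.restrict_congr_set Ioi_ae_eq_Ici.symm]
  exact tail_lintegral_le a ha hInt δ htail hx

lemma lintegral_swap_aux (S T : Set ℝ)
    (φ ψ : ℝ → ℝ≥0∞) (hφ : Measurable φ) (hψ : Measurable ψ) :
    ∫⁻ x in S, ψ x * ∫⁻ s in T ∩ Iic x, φ s
      = ∫⁻ s in T, φ s * ∫⁻ x in S ∩ Ici s, ψ x := by
  set F : ℝ → ℝ → ℝ≥0∞ := fun x s =>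
    ({p : ℝ × ℝ | p.2 ≤ p.1}).indicator (fun p => ψ p.1 * φ p.2) (x, s) with hF
  have hmeas : Measurable (Function.uncurry F) := by
    have : Function.uncurry F =
        ({p : ℝ × ℝ | p.2 ≤ p.1}).indicator (fun p => ψ p.1 * φ p.2) := rfl
    rw [this]
    exact ((hψ.comp measurable_fst).mul (hφ.comp measurable_snd)).indicator
      (measurableSet_le measurable_snd measurable_fst)
  have hL : ∀ x : ℝ, ∫⁻ s in T, F x s = ψ x * ∫⁻ s in T ∩ Iic x, φ s := by
    intro x
    have h1 : (fun s => F x s) = (Iic x).indicator (fun s => ψ x * φ s) := by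
      funext s
      simp only [hF, indicator, mem_setOf_eq, mem_Iic]
    rw [h1, lintegral_indicator measurableSet_Iic, Measure.restrict_restrict measurableSet_Iic,
      inter_comm, lintegral_const_mul _ hφ]
  have hR : ∀ s : ℝ, ∫⁻ x in S, F x s = φ s * ∫⁻ x in S ∩ Ici s, ψ x := by
    intro s
    have h1 : (fun x => F x s) = (Ici s).indicator (fun x => ψ x * φ s) := by
      funext x
      simp only [hF, indicator, mem_setOf_eq, mem_Ici]
    rw [h1, lintegral_indicator measurableSet_Ici, Measure.restrict_restrict measurableSet_Ici,
      inter_comm]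
    rw [show (fun x => ψ x * φ s) = fun x => φ s * ψ x from funext fun x => mul_comm _ _,
      lintegral_const_mul _ hψ]
  calc ∫⁻ x in S, ψ x * ∫⁻ s in T ∩ Iic x, φ s
      = ∫⁻ x in S, ∫⁻ s in T, F x s := by simp_rw [hL]
    _ = ∫⁻ s in T, ∫⁻ x in S, F x s := lintegral_lintegral_swap hmeas.aemeasurable
    _ = ∫⁻ s in T, φ s * ∫⁻ x in S ∩ Ici s, ψ x := by simp_rw [hR]

-- Step 3: G₁ bound
lemma G1_bound
    (a : ℝ → ℝ) (hma : Measurable a) (ha : ∀ x > (0:ℝ), 0 < a x)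
    (hInt : ∀ x > (0:ℝ), IntegrableOn (fun u => (a u)⁻¹) (Ioi x))
    (δ : ℝ) (hδpos : 0 < δ)
    (htail : ∀ x > (0:ℝ), x * ∫ u in Ioi x, (a u)⁻¹ ≤ δ)
    {t : ℝ} (ht : 0 < t) :
    ∫⁻ x in Ioi t, ENNReal.ofReal (x ^ (1/2:ℝ)) * ENNReal.ofReal (a x)⁻¹
      ≤ ENNReal.ofReal (2 * δ * t ^ (-(1/2):ℝ)) := by
  set A : ℝ → ℝ≥0∞ := fun x => ENNReal.ofReal (a x)⁻¹ with hA
  have hAm : Measurable A := hma.inv.ennreal_ofReal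
  set φ : ℝ → ℝ≥0∞ := fun s => ENNReal.ofReal (s ^ (-(1/2):ℝ) / 2) with hφdef
  have hφm : Measurable φ := by fun_prop
  -- pointwise decomposition
  have hdecomp : ∀ x ∈ Ioi t, ENNReal.ofReal (x ^ (1/2:ℝ))
      = ENNReal.ofReal (t ^ (1/2:ℝ)) + ∫⁻ s in Ioi t ∩ Iic x, φ s := by
    intro x hx
    rw [mem_Ioi] at hx
    have hx0 : 0 < x := ht.trans hx
    have hIcc : Ioi t ∩ Iic x = Ioc t x := rfl
    have hII : IntervalIntegrable (fun s : ℝ => s ^ (-(1/2):ℝ) / 2) volume t x :=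
      (intervalIntegral.intervalIntegrable_rpow' (by norm_num)).div_const 2
    have hint : ∫ s in t..x, s ^ (-(1/2):ℝ) / 2 = x ^ (1/2:ℝ) - t ^ (1/2:ℝ) := by
      rw [intervalIntegral.integral_div, integral_rpow (Or.inl (by norm_num))]
      norm_num
      ring
    have hIoc : ∫ s in Ioc t x, s ^ (-(1/2):ℝ) / 2 = x ^ (1/2:ℝ) - t ^ (1/2:ℝ) := by
      rw [← intervalIntegral.integral_of_le hx.le, hint]
    have hnn : 0 ≤ᵐ[volume.restrict (Ioc t x)] fun s : ℝ => s ^ (-(1/2):ℝ) / 2 := by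
      filter_upwards [ae_restrict_mem measurableSet_Ioc] with s hs
      have hs0 : 0 < s := ht.trans hs.1
      positivity
    have hlin : ∫⁻ s in Ioc t x, φ s = ENNReal.ofReal (x ^ (1/2:ℝ) - t ^ (1/2:ℝ)) := by
      rw [hφdef, ← MeasureTheory.ofReal_integral_eq_lintegral_ofReal hII.1 hnn, hIoc]
    rw [hIcc, hlin, ← ENNReal.ofReal_add (by positivity) (by
        have := Real.rpow_le_rpow ht.le hx.le (by norm_num : (0:ℝ) ≤ 1/2)
        linarith)]
    congr 1
    ring
  -- split the integral
  have hmono : ∫⁻ x in Ioi t, ENNReal.ofReal (x ^ (1/2:ℝ)) * A x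
      = ∫⁻ x in Ioi t, (ENNReal.ofReal (t ^ (1/2:ℝ)) * A x
          + (∫⁻ s in Ioi t ∩ Iic x, φ s) * A x) := by
    apply setLIntegral_congr_fun measurableSet_Ioi
    intro x hx
    beta_reduce
    rw [hdecomp x hx, add_mul]
  rw [hmono, lintegral_add_left (by fun_prop)]
  have h1 : ∫⁻ x in Ioi t, ENNReal.ofReal (t ^ (1/2:ℝ)) * A x
      ≤ ENNReal.ofReal (δ * t ^ (-(1/2):ℝ)) := by
    rw [lintegral_const_mul _ hAm]
    calc ENNReal.ofReal (t ^ (1/2:ℝ)) * ∫⁻ x in Ioi t, A x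
        ≤ ENNReal.ofReal (t ^ (1/2:ℝ)) * ENNReal.ofReal (δ / t) :=
          mul_le_mul_right (tail_lintegral_le a ha hInt δ htail ht) _
      _ = ENNReal.ofReal (δ * t ^ (-(1/2):ℝ)) := by
          rw [← ENNReal.ofReal_mul (by positivity)]
          congr 1
          rw [show (-(1/2):ℝ) = 1/2 - 1 by norm_num, Real.rpow_sub ht, Real.rpow_one]
          field_simp
  have h2 : ∫⁻ x in Ioi t, (∫⁻ s in Ioi t ∩ Iic x, φ s) * A x
      ≤ ENNReal.ofReal (δ * t ^ (-(1/2):ℝ)) := by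
    have hsw : ∫⁻ x in Ioi t, A x * ∫⁻ s in Ioi t ∩ Iic x, φ s
        = ∫⁻ s in Ioi t, φ s * ∫⁻ x in Ioi t ∩ Ici s, A x :=
      lintegral_swap_aux (Ioi t) (Ioi t) φ A hφm hAm
    calc ∫⁻ x in Ioi t, (∫⁻ s in Ioi t ∩ Iic x, φ s) * A x
        = ∫⁻ s in Ioi t, φ s * ∫⁻ x in Ioi t ∩ Ici s, A x := by
          rw [← hsw]; exact lintegral_congr fun x => mul_comm _ _
      _ ≤ ∫⁻ s in Ioi t, ENNReal.ofReal (δ / 2 * s ^ (-(3/2):ℝ)) := by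
          apply lintegral_mono_ae
          filter_upwards [ae_restrict_mem measurableSet_Ioi] with s hs
          rw [mem_Ioi] at hs
          have hs0 : 0 < s := ht.trans hs
          have hsub : Ioi t ∩ Ici s = Ici s := by
            apply inter_eq_self_of_subset_right
            exact fun y hy => lt_of_lt_of_le hs hy
          rw [hsub]
          calc φ s * ∫⁻ x in Ici s, A x
              ≤ ENNReal.ofReal (s ^ (-(1/2):ℝ) / 2) * ENNReal.ofReal (δ / s) :=
                mul_le_mul_right (tail_lintegral_le_Ici a ha hInt δ htail hs0) _
            _ = ENNReal.ofReal (δ / 2 * s ^ (-(3/2):ℝ)) := by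
                rw [← ENNReal.ofReal_mul (by positivity)]
                congr 1
                rw [show (-(3/2):ℝ) = -(1/2) + -1 by norm_num, Real.rpow_add hs0,
                  Real.rpow_neg_one]
                field_simp
      _ = ENNReal.ofReal (δ * t ^ (-(1/2):ℝ)) := by
          have hInt32 : IntegrableOn (fun s : ℝ => s ^ (-(3/2):ℝ)) (Ioi t) :=
            integrableOn_Ioi_rpow_of_lt (by norm_num) ht
          have hnn : 0 ≤ᵐ[volume.restrict (Ioi t)]
              fun s : ℝ => δ / 2 * s ^ (-(3/2):ℝ) := by
            filter_upwards [ae_restrict_mem measurableSet_Ioi] with s hs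
            have : 0 < s := ht.trans hs
            positivity
          rw [← MeasureTheory.ofReal_integral_eq_lintegral_ofReal (hInt32.const_mul _) hnn]
          congr 1
          rw [MeasureTheory.integral_const_mul, integral_Ioi_rpow_of_lt (by norm_num) ht]
          norm_num
          ring
  calc (∫⁻ x in Ioi t, ENNReal.ofReal (t ^ (1/2:ℝ)) * A x)
        + ∫⁻ x in Ioi t, (∫⁻ s in Ioi t ∩ Iic x, φ s) * A x
      ≤ ENNReal.ofReal (δ * t ^ (-(1/2):ℝ)) + ENNReal.ofReal (δ * t ^ (-(1/2):ℝ)) :=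
        add_le_add h1 h2
    _ = ENNReal.ofReal (2 * δ * t ^ (-(1/2):ℝ)) := by
        rw [← ENNReal.ofReal_add (by positivity) (by positivity)]
        congr 1
        ring

lemma cs_pointwise (g : ℝ → ℝ) (hg : ∀ x : ℝ, IntervalIntegrable g volume 0 x)
    {x : ℝ} (hx : 0 < x) :
    ENNReal.ofReal ((∫ t in (0:ℝ)..x, g t) ^ 2)
      ≤ ENNReal.ofReal (2 * x ^ (1/2:ℝ))
        * ∫⁻ t in Ioc 0 x, ENNReal.ofReal (g t ^ 2 * t ^ (1/2:ℝ)) := by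
  set μ := volume.restrict (Ioc (0:ℝ) x) with hμ
  set F : ℝ → ℝ≥0∞ := fun t => ENNReal.ofReal |g t| * ENNReal.ofReal (t ^ (1/4:ℝ)) with hFdef
  set G : ℝ → ℝ≥0∞ := fun t => ENNReal.ofReal (t ^ (-(1/4):ℝ)) with hGdef
  have hgae : AEMeasurable (fun t => ENNReal.ofReal |g t|) μ :=
    ((hg x).1.abs.aestronglyMeasurable.aemeasurable).ennreal_ofReal
  have hFm : AEMeasurable F μ := hgae.mul (by fun_prop)
  have hGm : AEMeasurable G μ := by fun_prop
  have hconj : Real.HolderConjugate 2 2 := Real.HolderConjugate.two_two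
  have hmem : ∀ᵐ t ∂μ, t ∈ Ioc (0:ℝ) x := ae_restrict_mem measurableSet_Ioc
  -- F * G = ofReal |g| a.e.
  have hFG : ∀ᵐ t ∂μ, (F * G) t = ENNReal.ofReal |g t| := by
    filter_upwards [hmem] with t ht
    have ht0 : 0 < t := ht.1
    have : ENNReal.ofReal (t ^ (1/4:ℝ)) * ENNReal.ofReal (t ^ (-(1/4):ℝ))
        = 1 := by
      rw [← ENNReal.ofReal_mul (by positivity), ← Real.rpow_add ht0]
      norm_num
    simp only [Pi.mul_apply, hFdef, hGdef, mul_assoc, this, mul_one]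
  have holder := ENNReal.lintegral_mul_le_Lp_mul_Lq μ hconj hFm hGm
  -- compute ∫⁻ F ^ 2
  have hF2 : ∫⁻ t, F t ^ (2:ℝ) ∂μ
      = ∫⁻ t in Ioc 0 x, ENNReal.ofReal (g t ^ 2 * t ^ (1/2:ℝ)) := by
    apply lintegral_congr_ae
    filter_upwards [hmem] with t ht
    have ht0 : 0 < t := ht.1
    rw [hFdef]
    rw [ENNReal.rpow_two, mul_pow, ← ENNReal.ofReal_pow (abs_nonneg _),
      ← ENNReal.ofReal_pow (by positivity), sq_abs,
      ← ENNReal.ofReal_mul (by positivity)]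
    congr 2
    rw [← Real.rpow_natCast (t ^ (1/4:ℝ)) 2, ← Real.rpow_mul ht0.le]
    norm_num
  -- compute ∫⁻ G ^ 2
  have hG2 : ∫⁻ t, G t ^ (2:ℝ) ∂μ = ENNReal.ofReal (2 * x ^ (1/2:ℝ)) := by
    have h1 : ∫⁻ t, G t ^ (2:ℝ) ∂μ = ∫⁻ t in Ioc 0 x, ENNReal.ofReal (t ^ (-(1/2):ℝ)) := by
      apply lintegral_congr_ae
      filter_upwards [hmem] with t ht
      have ht0 : 0 < t := ht.1
      rw [hGdef, ENNReal.rpow_two, ← ENNReal.ofReal_pow (by positivity)]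
      congr 1
      rw [← Real.rpow_natCast (t ^ (-(1/4):ℝ)) 2, ← Real.rpow_mul ht0.le]
      norm_num
    have hII : IntervalIntegrable (fun t : ℝ => t ^ (-(1/2):ℝ)) volume 0 x :=
      intervalIntegral.intervalIntegrable_rpow' (by norm_num)
    have hnn : 0 ≤ᵐ[μ] fun t : ℝ => t ^ (-(1/2):ℝ) := by
      filter_upwards [hmem] with t ht
      have ht0 : 0 < t := ht.1
      positivity
    rw [h1, ← MeasureTheory.ofReal_integral_eq_lintegral_ofReal hII.1 hnn]
    congr 1
    rw [← intervalIntegral.integral_of_le hx.le, integral_rpow (Or.inl (by norm_num)),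
      Real.zero_rpow (by norm_num)]
    norm_num
    ring
  -- assemble
  have step1 : ENNReal.ofReal |∫ t in (0:ℝ)..x, g t| ≤ ∫⁻ t, ENNReal.ofReal |g t| ∂μ := by
    have habs : |∫ t in (0:ℝ)..x, g t| ≤ ∫ t in (0:ℝ)..x, |g t| :=
      intervalIntegral.abs_integral_le_integral_abs hx.le
    have : ∫ t in (0:ℝ)..x, |g t| = ∫ t in Ioc 0 x, |g t| :=
      intervalIntegral.integral_of_le hx.le
    calc ENNReal.ofReal |∫ t in (0:ℝ)..x, g t|
        ≤ ENNReal.ofReal (∫ t in Ioc 0 x, |g t|) := by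
          exact ENNReal.ofReal_le_ofReal (this ▸ habs)
      _ = ∫⁻ t, ENNReal.ofReal |g t| ∂μ := by
          exact MeasureTheory.ofReal_integral_eq_lintegral_ofReal (hg x).1.abs
            (Filter.Eventually.of_forall fun t => abs_nonneg _)
  have step2 : ∫⁻ t, ENNReal.ofReal |g t| ∂μ
      ≤ (∫⁻ t, F t ^ (2:ℝ) ∂μ) ^ (1/2:ℝ) * (∫⁻ t, G t ^ (2:ℝ) ∂μ) ^ (1/2:ℝ) := by
    calc ∫⁻ t, ENNReal.ofReal |g t| ∂μ = ∫⁻ t, (F * G) t ∂μ :=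
          (lintegral_congr_ae hFG).symm
      _ ≤ _ := holder
  have key : ENNReal.ofReal ((∫ t in (0:ℝ)..x, g t) ^ 2)
      ≤ (∫⁻ t, F t ^ (2:ℝ) ∂μ) * (∫⁻ t, G t ^ (2:ℝ) ∂μ) := by
    have h0 : ENNReal.ofReal ((∫ t in (0:ℝ)..x, g t) ^ 2)
        = ENNReal.ofReal |∫ t in (0:ℝ)..x, g t| ^ 2 := by
      rw [← ENNReal.ofReal_pow (abs_nonneg _), sq_abs]
    rw [h0]
    calc ENNReal.ofReal |∫ t in (0:ℝ)..x, g t| ^ 2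
        ≤ ((∫⁻ t, F t ^ (2:ℝ) ∂μ) ^ (1/2:ℝ) * (∫⁻ t, G t ^ (2:ℝ) ∂μ) ^ (1/2:ℝ)) ^ 2 :=
          pow_le_pow_left' (step1.trans step2) 2
      _ = (∫⁻ t, F t ^ (2:ℝ) ∂μ) * (∫⁻ t, G t ^ (2:ℝ) ∂μ) := by
          rw [mul_pow, ← ENNReal.rpow_natCast (_ ^ (1/2:ℝ)) 2, ← ENNReal.rpow_natCast
            ((∫⁻ t, G t ^ (2:ℝ) ∂μ) ^ (1/2:ℝ)) 2, ← ENNReal.rpow_mul, ← ENNReal.rpow_mul]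
          norm_num
  calc ENNReal.ofReal ((∫ t in (0:ℝ)..x, g t) ^ 2)
      ≤ (∫⁻ t, F t ^ (2:ℝ) ∂μ) * (∫⁻ t, G t ^ (2:ℝ) ∂μ) := key
    _ = ENNReal.ofReal (2 * x ^ (1/2:ℝ))
        * ∫⁻ t in Ioc 0 x, ENNReal.ofReal (g t ^ 2 * t ^ (1/2:ℝ)) := by
        rw [hF2, hG2, mul_comm]

lemma hardy_ineq
    (a : ℝ → ℝ) (hma : Measurable a) (ha : ∀ x > (0:ℝ), 0 < a x)
    (hInt : ∀ x > (0:ℝ), IntegrableOn (fun u => (a u)⁻¹) (Ioi x))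
    (δ : ℝ) (hδpos : 0 < δ)
    (htail : ∀ x > (0:ℝ), x * ∫ u in Ioi x, (a u)⁻¹ ≤ δ)
    (f g : ℝ → ℝ)
    (hgI : ∀ x : ℝ, IntervalIntegrable g volume 0 x)
    (hf : ∀ x ≥ (0:ℝ), f x = ∫ t in (0:ℝ)..x, g t)
    (hfa : IntegrableOn (fun x => f x ^ 2 / a x) (Ioi 0))
    (hg2 : IntegrableOn (fun x => g x ^ 2) (Ioi 0)) :
    (∫ x in Ioi (0:ℝ), f x ^ 2 / a x) ≤ 4 * δ * ∫ x in Ioi (0:ℝ), g x ^ 2 := by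
  set A : ℝ → ℝ≥0∞ := fun x => ENNReal.ofReal (a x)⁻¹ with hAdef
  have hAm : Measurable A := hma.inv.ennreal_ofReal
  -- measurable version of ofReal (g²)
  have hae : AEMeasurable (fun t => ENNReal.ofReal (g t ^ 2)) (volume.restrict (Ioi 0)) :=
    hg2.aestronglyMeasurable.aemeasurable.ennreal_ofReal
  set h : ℝ → ℝ≥0∞ := hae.mk _ with hhdef
  have hhm : Measurable h := hae.measurable_mk
  have heq : (fun t => ENNReal.ofReal (g t ^ 2)) =ᵐ[volume.restrict (Ioi 0)] h := hae.ae_eq_mk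
  set φ : ℝ → ℝ≥0∞ := fun t => h t * ENNReal.ofReal (t ^ (1/2:ℝ)) with hφdef
  have hφm : Measurable φ := by fun_prop
  have hφeq : (fun t => ENNReal.ofReal (g t ^ 2 * t ^ (1/2:ℝ)))
      =ᵐ[volume.restrict (Ioi 0)] φ := by
    filter_upwards [heq, ae_restrict_mem measurableSet_Ioi] with t ht ht0
    have : ENNReal.ofReal (g t ^ 2 * t ^ (1/2:ℝ)) = h t * ENNReal.ofReal (t ^ (1/2:ℝ)) := by
      rw [← ht, ← ENNReal.ofReal_mul (sq_nonneg _)]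
    exact this
  have hKeq : ∀ x > (0:ℝ), ∫⁻ t in Ioc 0 x, ENNReal.ofReal (g t ^ 2 * t ^ (1/2:ℝ))
      = ∫⁻ t in Ioc 0 x, φ t := by
    intro x hx
    apply lintegral_congr_ae
    exact ae_restrict_of_ae_restrict_of_subset Ioc_subset_Ioi_self hφeq
  set ψ : ℝ → ℝ≥0∞ := fun x => ENNReal.ofReal (2 * x ^ (1/2:ℝ)) * A x with hψdef
  have hψm : Measurable ψ := by fun_prop
  -- step A
  have stepA : ∫⁻ x in Ioi 0, ENNReal.ofReal (f x ^ 2 / a x)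
      ≤ ∫⁻ x in Ioi 0, ψ x * ∫⁻ t in Ioi 0 ∩ Iic x, φ t := by
    apply lintegral_mono_ae
    filter_upwards [ae_restrict_mem measurableSet_Ioi] with x hx
    rw [mem_Ioi] at hx
    have h1 : ENNReal.ofReal (f x ^ 2 / a x) = ENNReal.ofReal (f x ^ 2) * A x := by
      rw [div_eq_mul_inv, ENNReal.ofReal_mul (sq_nonneg _)]
    have h2 : ENNReal.ofReal (f x ^ 2)
        ≤ ENNReal.ofReal (2 * x ^ (1/2:ℝ)) * ∫⁻ t in Ioc 0 x, φ t := by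
      rw [← hKeq x hx, hf x hx.le]
      exact cs_pointwise g hgI hx
    rw [h1, Ioi_inter_Iic]
    calc ENNReal.ofReal (f x ^ 2) * A x
        ≤ (ENNReal.ofReal (2 * x ^ (1/2:ℝ)) * ∫⁻ t in Ioc 0 x, φ t) * A x :=
          mul_le_mul_left h2 _
      _ = ψ x * ∫⁻ t in Ioc 0 x, φ t := by rw [hψdef]; ring
  -- step B : swap
  have stepB : ∫⁻ x in Ioi 0, ψ x * ∫⁻ t in Ioi 0 ∩ Iic x, φ t
      = ∫⁻ t in Ioi 0, φ t * ∫⁻ x in Ioi 0 ∩ Ici t, ψ x :=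
    lintegral_swap_aux (Ioi 0) (Ioi 0) φ ψ hφm hψm
  -- step C
  have stepC : ∫⁻ t in Ioi 0, φ t * ∫⁻ x in Ioi 0 ∩ Ici t, ψ x
      ≤ ∫⁻ t in Ioi 0, ENNReal.ofReal (4 * δ) * h t := by
    apply lintegral_mono_ae
    filter_upwards [ae_restrict_mem measurableSet_Ioi] with t ht
    rw [mem_Ioi] at ht
    have hsub : Ioi 0 ∩ Ici t = Ici t :=
      inter_eq_self_of_subset_right fun y hy => lt_of_lt_of_le ht hy
    have hIci : ∫⁻ x in Ici t, ψ x = ∫⁻ x in Ioi t, ψ x := by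
      rw [← Measure.restrict_congr_set Ioi_ae_eq_Ici]
    have hψbound : ∫⁻ x in Ioi t, ψ x ≤ ENNReal.ofReal (4 * δ * t ^ (-(1/2):ℝ)) := by
      have hsplit : ∀ x : ℝ, ψ x = ENNReal.ofReal 2
          * (ENNReal.ofReal (x ^ (1/2:ℝ)) * A x) := by
        intro x
        show ENNReal.ofReal (2 * x ^ (1/2:ℝ)) * A x = _
        rw [ENNReal.ofReal_mul (by norm_num), mul_assoc]
      calc ∫⁻ x in Ioi t, ψ x
          = ENNReal.ofReal 2 * ∫⁻ x in Ioi t, ENNReal.ofReal (x ^ (1/2:ℝ)) * A x := by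
            simp_rw [hsplit]
            exact lintegral_const_mul _ (by fun_prop)
        _ ≤ ENNReal.ofReal 2 * ENNReal.ofReal (2 * δ * t ^ (-(1/2):ℝ)) :=
            mul_le_mul_right (G1_bound a hma ha hInt δ hδpos htail ht) _
        _ = ENNReal.ofReal (4 * δ * t ^ (-(1/2):ℝ)) := by
            rw [← ENNReal.ofReal_mul (by norm_num)]
            congr 1
            ring
    calc φ t * ∫⁻ x in Ioi 0 ∩ Ici t, ψ x
        ≤ (h t * ENNReal.ofReal (t ^ (1/2:ℝ))) * ENNReal.ofReal (4 * δ * t ^ (-(1/2):ℝ)) := by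
          rw [hsub, hIci]
          exact mul_le_mul_right hψbound _
      _ = ENNReal.ofReal (4 * δ) * h t := by
          have hsc : ENNReal.ofReal (t ^ (1/2:ℝ)) * ENNReal.ofReal (4 * δ * t ^ (-(1/2):ℝ))
              = ENNReal.ofReal (4 * δ) := by
            rw [← ENNReal.ofReal_mul (by positivity)]
            congr 1
            rw [show t ^ (1/2:ℝ) * (4 * δ * t ^ (-(1/2):ℝ))
                = 4 * δ * (t ^ (1/2:ℝ) * t ^ (-(1/2):ℝ)) by ring, ← Real.rpow_add ht,
              show (1/2 + -(1/2) : ℝ) = 0 by norm_num, Real.rpow_zero, mul_one]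
          rw [mul_assoc, hsc, mul_comm]
  -- step D
  have stepD : ∫⁻ t in Ioi 0, ENNReal.ofReal (4 * δ) * h t
      = ENNReal.ofReal (4 * δ * ∫ x in Ioi (0:ℝ), g x ^ 2) := by
    rw [lintegral_const_mul _ hhm, ← lintegral_congr_ae heq,
      ← MeasureTheory.ofReal_integral_eq_lintegral_ofReal hg2
        (Filter.Eventually.of_forall fun t => sq_nonneg _),
      ← ENNReal.ofReal_mul (by positivity)]
  -- conclude
  have hnnI : 0 ≤ᵐ[volume.restrict (Ioi 0)] fun x => f x ^ 2 / a x := by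
    filter_upwards [ae_restrict_mem measurableSet_Ioi] with x hx
    exact div_nonneg (sq_nonneg _) (ha x hx).le
  have hJnn : 0 ≤ ∫ x in Ioi (0:ℝ), g x ^ 2 :=
    setIntegral_nonneg measurableSet_Ioi fun x _ => sq_nonneg _
  have final : ENNReal.ofReal (∫ x in Ioi (0:ℝ), f x ^ 2 / a x)
      ≤ ENNReal.ofReal (4 * δ * ∫ x in Ioi (0:ℝ), g x ^ 2) := by
    rw [MeasureTheory.ofReal_integral_eq_lintegral_ofReal hfa hnnI]
    exact ((stepA.trans_eq stepB).trans stepC).trans_eq stepD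
  exact (ENNReal.ofReal_le_ofReal_iff (by positivity)).mp final

lemma sq_div_integrable
    (a : ℝ → ℝ) (hma : Measurable a) (ha : ∀ x > (0:ℝ), 0 < a x)
    (hInt : ∀ x > (0:ℝ), IntegrableOn (fun u => (a u)⁻¹) (Ioi x))
    (δ : ℝ)
    (htail : ∀ x > (0:ℝ), x * ∫ u in Ioi x, (a u)⁻¹ ≤ δ)
    {x₀ : ℝ} (hx₀ : 0 < x₀) :
    IntegrableOn (fun x => x ^ 2 / a x) (Ioc 0 x₀) := by
  set A : ℝ → ℝ≥0∞ := fun x => ENNReal.ofReal (a x)⁻¹ with hAdef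
  have hAm : Measurable A := hma.inv.ennreal_ofReal
  set φ : ℝ → ℝ≥0∞ := fun s => ENNReal.ofReal (2 * s) with hφdef
  have hφm : Measurable φ := by fun_prop
  have hnn : 0 ≤ᵐ[volume.restrict (Ioc 0 x₀)] fun x => x ^ 2 / a x := by
    filter_upwards [ae_restrict_mem measurableSet_Ioc] with x hx
    exact div_nonneg (sq_nonneg _) (ha x hx.1).le
  constructor
  · exact ((measurable_id.pow_const 2).div hma).aestronglyMeasurable
  rw [hasFiniteIntegral_iff_ofReal hnn]
  have hpt : ∫⁻ x in Ioc 0 x₀, ENNReal.ofReal (x ^ 2 / a x)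
      = ∫⁻ x in Ioc 0 x₀, A x * ∫⁻ s in Ioc 0 x₀ ∩ Iic x, φ s := by
    apply lintegral_congr_ae
    filter_upwards [ae_restrict_mem measurableSet_Ioc] with x hx
    have hx0 : 0 < x := hx.1
    have hIcc : Ioc 0 x₀ ∩ Iic x = Ioc 0 x := by
      ext s
      simp only [mem_inter_iff, mem_Ioc, mem_Iic]
      constructor
      · rintro ⟨⟨h1, _⟩, h3⟩; exact ⟨h1, h3⟩
      · rintro ⟨h1, h2⟩; exact ⟨⟨h1, h2.trans hx.2⟩, h2⟩
    have hx2 : ∫⁻ s in Ioc 0 x, φ s = ENNReal.ofReal (x ^ 2) := by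
      have hII : IntervalIntegrable (fun s : ℝ => 2 * s) volume 0 x :=
        (continuous_const.mul continuous_id).intervalIntegrable 0 x
      have hnn2 : 0 ≤ᵐ[volume.restrict (Ioc 0 x)] fun s : ℝ => 2 * s := by
        filter_upwards [ae_restrict_mem measurableSet_Ioc] with s hs
        simp only [Pi.zero_apply]
        linarith [hs.1]
      rw [hφdef, ← MeasureTheory.ofReal_integral_eq_lintegral_ofReal hII.1 hnn2]
      congr 1
      rw [← intervalIntegral.integral_of_le hx0.le, intervalIntegral.integral_const_mul,
        integral_id]
      ring
    rw [hIcc, hx2, div_eq_mul_inv, ENNReal.ofReal_mul (sq_nonneg _), mul_comm]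
  rw [hpt, lintegral_swap_aux (Ioc 0 x₀) (Ioc 0 x₀) φ A hφm hAm]
  have hbound : ∫⁻ s in Ioc 0 x₀, φ s * ∫⁻ x in Ioc 0 x₀ ∩ Ici s, A x
      ≤ ∫⁻ (_ : ℝ) in Ioc 0 x₀, ENNReal.ofReal (2 * δ) := by
    apply lintegral_mono_ae
    filter_upwards [ae_restrict_mem measurableSet_Ioc] with s hs
    have hs0 : 0 < s := hs.1
    calc φ s * ∫⁻ x in Ioc 0 x₀ ∩ Ici s, A x
        ≤ ENNReal.ofReal (2 * s) * ∫⁻ x in Ici s, A x :=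
          mul_le_mul_right (lintegral_mono_set inter_subset_right) _
      _ ≤ ENNReal.ofReal (2 * s) * ENNReal.ofReal (δ / s) :=
          mul_le_mul_right (tail_lintegral_le_Ici a ha hInt δ htail hs0) _
      _ = ENNReal.ofReal (2 * δ) := by
          rw [← ENNReal.ofReal_mul (by positivity)]
          congr 1
          field_simp
  calc ∫⁻ s in Ioc 0 x₀, φ s * ∫⁻ x in Ioc 0 x₀ ∩ Ici s, A x
      ≤ ∫⁻ (_ : ℝ) in Ioc 0 x₀, ENNReal.ofReal (2 * δ) := hbound
    _ = ENNReal.ofReal (2 * δ) * volume (Ioc 0 x₀) := setLIntegral_const _ _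
    _ < ⊤ := ENNReal.mul_lt_top ENNReal.ofReal_lt_top (by
        rw [Real.volume_Ioc]; exact ENNReal.ofReal_lt_top)

lemma test_quotient
    (a : ℝ → ℝ) (hma : Measurable a) (ha : ∀ x > (0:ℝ), 0 < a x)
    (hInt : ∀ x > (0:ℝ), IntegrableOn (fun u => (a u)⁻¹) (Ioi x))
    (δ : ℝ)
    (htail : ∀ x > (0:ℝ), x * ∫ u in Ioi x, (a u)⁻¹ ≤ δ)
    {x₀ : ℝ} (hx₀ : 0 < x₀) (hF : 0 < ∫ u in Ioi x₀, (a u)⁻¹) :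
    ∃ f g : ℝ → ℝ,
      (∀ x : ℝ, IntervalIntegrable g volume 0 x) ∧
      (∀ x ≥ (0:ℝ), f x = ∫ t in (0:ℝ)..x, g t) ∧
      IntegrableOn (fun x => f x ^ 2 / a x) (Ioi 0) ∧
      (0 < ∫ x in Ioi (0:ℝ), f x ^ 2 / a x) ∧
      IntegrableOn (fun x => g x ^ 2) (Ioi 0) ∧
      (∫ x in Ioi (0:ℝ), g x ^ 2) / (∫ x in Ioi (0:ℝ), f x ^ 2 / a x)
        ≤ (x₀ * ∫ u in Ioi x₀, (a u)⁻¹)⁻¹ := by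
  set F := ∫ u in Ioi x₀, (a u)⁻¹ with hFdef
  set g : ℝ → ℝ := (Ioc 0 x₀).indicator (fun _ => (1:ℝ)) with hgdef
  have hgint : Integrable g volume := by
    rw [hgdef, integrable_indicator_iff measurableSet_Ioc]
    exact integrableOn_const (by rw [Real.volume_Ioc]; exact ENNReal.ofReal_ne_top)
  set f : ℝ → ℝ := fun x => ∫ t in (0:ℝ)..x, g t with hfdef
  have hgI : ∀ x : ℝ, IntervalIntegrable g volume 0 x := fun x => hgint.intervalIntegrable
  have hfval : ∀ x ≥ (0:ℝ), f x = min x x₀ := by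
    intro x hx
    show (∫ t in (0:ℝ)..x, g t) = min x x₀
    rw [intervalIntegral.integral_of_le hx, hgdef, setIntegral_indicator measurableSet_Ioc,
      Ioc_inter_Ioc, setIntegral_const]
    simp only [max_self, smul_eq_mul, mul_one]
    rw [Real.volume_real_Ioc_of_le (le_min hx hx₀.le), sub_zero]
  have hg2val : ∀ x : ℝ, g x ^ 2 = g x := by
    intro x
    rw [hgdef]
    simp only [indicator]
    split <;> norm_num
  have hg2 : IntegrableOn (fun x => g x ^ 2) (Ioi 0) := by
    rw [show (fun x => g x ^ 2) = g from funext hg2val]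
    exact hgint.integrableOn
  have hJval : ∫ x in Ioi (0:ℝ), g x ^ 2 = x₀ := by
    simp_rw [hg2val]
    rw [hgdef, setIntegral_indicator measurableSet_Ioc,
      inter_eq_self_of_subset_right Ioc_subset_Ioi_self, setIntegral_const]
    simp only [smul_eq_mul, mul_one]
    rw [Real.volume_real_Ioc_of_le hx₀.le, sub_zero]
  have hfa : IntegrableOn (fun x => f x ^ 2 / a x) (Ioi 0) := by
    have h1 : IntegrableOn (fun x => f x ^ 2 / a x) (Ioc 0 x₀) := by
      apply (sq_div_integrable a hma ha hInt δ htail hx₀).congr_fun _ measurableSet_Ioc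
      intro x hx
      simp only
      rw [hfval x hx.1.le, min_eq_left hx.2]
    have h2 : IntegrableOn (fun x => f x ^ 2 / a x) (Ioi x₀) := by
      apply IntegrableOn.congr_fun ((hInt x₀ hx₀).const_mul (x₀ ^ 2)) _ measurableSet_Ioi
      intro x hx
      simp only
      rw [hfval x (hx₀.trans hx).le, min_eq_right (le_of_lt hx), div_eq_mul_inv]
    rw [show Ioi (0:ℝ) = Ioc 0 x₀ ∪ Ioi x₀ from (Ioc_union_Ioi_eq_Ioi hx₀.le).symm]
    exact h1.union h2
  have htailval : ∫ x in Ioi x₀, f x ^ 2 / a x = x₀ ^ 2 * F := by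
    rw [hFdef, ← MeasureTheory.integral_const_mul]
    apply setIntegral_congr_fun measurableSet_Ioi
    intro x hx
    simp only
    rw [hfval x (hx₀.trans hx).le, min_eq_right (le_of_lt hx), div_eq_mul_inv]
  have hnnI : 0 ≤ᵐ[volume.restrict (Ioi 0)] fun x => f x ^ 2 / a x := by
    filter_upwards [ae_restrict_mem measurableSet_Ioi] with x hx
    exact div_nonneg (sq_nonneg _) (ha x hx).le
  have hlow : x₀ ^ 2 * F ≤ ∫ x in Ioi (0:ℝ), f x ^ 2 / a x := by
    rw [← htailval]
    exact setIntegral_mono_set hfa hnnI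
      (HasSubset.Subset.eventuallyLE (Ioi_subset_Ioi hx₀.le))
  have hIpos : 0 < ∫ x in Ioi (0:ℝ), f x ^ 2 / a x :=
    lt_of_lt_of_le (mul_pos (pow_pos hx₀ 2) hF) hlow
  refine ⟨f, g, hgI, fun x _ => rfl, hfa, hIpos, hg2, ?_⟩
  rw [hJval]
  have h1 : x₀ / (∫ x in Ioi (0:ℝ), f x ^ 2 / a x) ≤ x₀ / (x₀ ^ 2 * F) := by
    gcongr
    all_goals first
      | exact mul_pos (pow_pos hx₀ 2) hF
      | exact hlow
  refine h1.trans_eq ?_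
  rw [eq_comm, inv_eq_iff_eq_inv, eq_comm, inv_div]
  field_simp

/-- Kac & Krein (1958): for `L = a d²/dx²` on `[0,∞)` with Dirichlet boundary at `0`,
if `δ = sup_{x>0} x ∫_x^∞ a⁻¹` satisfies `0 < δ < ∞`, then `(4δ)⁻¹ ≤ λ₀ ≤ δ⁻¹`. -/
theorem kac_krein_bounds
    (a : ℝ → ℝ) (hma : Measurable a) (ha : ∀ x > (0:ℝ), 0 < a x)
    (hInt : ∀ x > (0:ℝ), IntegrableOn (fun u => (a u)⁻¹) (Ioi x))
    (δ : ℝ)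
    (hδ : δ = ⨆ x : {x : ℝ // 0 < x}, (x:ℝ) * ∫ u in Ioi (x:ℝ), (a u)⁻¹)
    (hδbdd : BddAbove (Set.range fun x : {x : ℝ // 0 < x} =>
      (x:ℝ) * ∫ u in Ioi (x:ℝ), (a u)⁻¹))
    (hδpos : 0 < δ)
    (lam0 : ℝ)
    (hlam0 : lam0 = sInf { r : ℝ | ∃ f g : ℝ → ℝ,
      (∀ x : ℝ, IntervalIntegrable g volume 0 x) ∧
      (∀ x ≥ (0:ℝ), f x = ∫ t in (0:ℝ)..x, g t) ∧
      IntegrableOn (fun x => f x ^ 2 / a x) (Ioi 0) ∧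
      (0 < ∫ x in Ioi (0:ℝ), f x ^ 2 / a x) ∧
      IntegrableOn (fun x => g x ^ 2) (Ioi 0) ∧
      r = (∫ x in Ioi (0:ℝ), g x ^ 2) / ∫ x in Ioi (0:ℝ), f x ^ 2 / a x }) :
    (4 * δ)⁻¹ ≤ lam0 ∧ lam0 ≤ δ⁻¹ := by
  set S := { r : ℝ | ∃ f g : ℝ → ℝ,
      (∀ x : ℝ, IntervalIntegrable g volume 0 x) ∧
      (∀ x ≥ (0:ℝ), f x = ∫ t in (0:ℝ)..x, g t) ∧
      IntegrableOn (fun x => f x ^ 2 / a x) (Ioi 0) ∧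
      (0 < ∫ x in Ioi (0:ℝ), f x ^ 2 / a x) ∧
      IntegrableOn (fun x => g x ^ 2) (Ioi 0) ∧
      r = (∫ x in Ioi (0:ℝ), g x ^ 2) / ∫ x in Ioi (0:ℝ), f x ^ 2 / a x } with hSdef
  have htail : ∀ x > (0:ℝ), x * ∫ u in Ioi x, (a u)⁻¹ ≤ δ := by
    intro x hx
    rw [hδ]
    exact le_ciSup hδbdd ⟨x, hx⟩
  -- a point with positive tail
  have hex : ∃ x₀ : {x : ℝ // 0 < x}, 0 < (x₀:ℝ) * ∫ u in Ioi (x₀:ℝ), (a u)⁻¹ :=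
    exists_lt_of_lt_ciSup (hδ ▸ hδpos)
  obtain ⟨⟨x₀, hx₀⟩, hx₀F⟩ := hex
  have hFpos : 0 < ∫ u in Ioi x₀, (a u)⁻¹ := by nlinarith
  obtain ⟨f₀, g₀, hp1, hp2, hp3, hp4, hp5, hp6⟩ :=
    test_quotient a hma ha hInt δ htail hx₀ hFpos
  have hmem : ((∫ x in Ioi (0:ℝ), g₀ x ^ 2) / ∫ x in Ioi (0:ℝ), f₀ x ^ 2 / a x) ∈ S :=
    ⟨f₀, g₀, hp1, hp2, hp3, hp4, hp5, rfl⟩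
  have hSne : S.Nonempty := ⟨_, hmem⟩
  have hSbdd : BddBelow S := by
    refine ⟨0, fun r hr => ?_⟩
    obtain ⟨f, g, _, _, _, hI, _, hr⟩ := hr
    rw [hr]
    exact div_nonneg (setIntegral_nonneg measurableSet_Ioi fun x _ => sq_nonneg _) hI.le
  constructor
  · -- lower bound
    rw [hlam0]
    apply le_csInf hSne
    rintro r ⟨f, g, hgI, hf, hfa, hIpos, hg2, hr⟩
    have hhardy := hardy_ineq a hma ha hInt δ hδpos htail f g hgI hf hfa hg2
    rw [hr, le_div_iff₀ hIpos]
    calc (4 * δ)⁻¹ * ∫ x in Ioi (0:ℝ), f x ^ 2 / a x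
        ≤ (4 * δ)⁻¹ * (4 * δ * ∫ x in Ioi (0:ℝ), g x ^ 2) := by
          apply mul_le_mul_of_nonneg_left hhardy
          positivity
      _ = ∫ x in Ioi (0:ℝ), g x ^ 2 := by
          rw [← mul_assoc, inv_mul_cancel₀ (by positivity), one_mul]
  · -- upper bound
    apply le_of_forall_gt_imp_ge_of_dense
    intro b hb
    have hbpos : 0 < b := lt_trans (inv_pos.2 hδpos) hb
    have hbinv : b⁻¹ < δ := by
      have := inv_strictAnti₀ (inv_pos.2 hδpos) hb
      rwa [inv_inv] at this
    obtain ⟨⟨x₁, hx₁⟩, hcF⟩ :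
        ∃ x : {x : ℝ // 0 < x}, b⁻¹ < (x:ℝ) * ∫ u in Ioi (x:ℝ), (a u)⁻¹ :=
      exists_lt_of_lt_ciSup (hδ ▸ hbinv)
    have hbinvpos : 0 < b⁻¹ := inv_pos.2 hbpos
    have hF1pos : 0 < ∫ u in Ioi x₁, (a u)⁻¹ := by nlinarith
    obtain ⟨f₁, g₁, hq1, hq2, hq3, hq4, hq5, hq6⟩ :=
      test_quotient a hma ha hInt δ htail hx₁ hF1pos
    have hmem1 : ((∫ x in Ioi (0:ℝ), g₁ x ^ 2) / ∫ x in Ioi (0:ℝ), f₁ x ^ 2 / a x) ∈ S :=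
      ⟨f₁, g₁, hq1, hq2, hq3, hq4, hq5, rfl⟩
    have hle : ((∫ x in Ioi (0:ℝ), g₁ x ^ 2) / ∫ x in Ioi (0:ℝ), f₁ x ^ 2 / a x) ≤ b := by
      refine hq6.trans ?_
      have := inv_anti₀ hbinvpos hcF.le
      rwa [inv_inv] at this
    rw [hlam0]
    exact (csInf_le hSbdd hmem1).trans hle
end

section
/- (Hardy's inequality) Let p > 1 and let f : [0,∞) → ℝ be absolutely continuous with f(0) = 0 and f' ≥ 0 almost everywhere. Then ∫_0^∞ (f(x)/x)^p dx ≤ (p/(p−1))^p ∫_0^∞ f'(x)^p dx. -/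
open MeasureTheory Set Real ENNReal

private lemma hardy_pointwise
    {p q : ℝ} (hpq : p.HolderConjugate q)
    {g : ℝ → ℝ}
    {x : ℝ} (hx : 0 < x) (hgi : IntegrableOn g (Ioc 0 x))
    (hg0 : ∀ᵐ t ∂(volume.restrict (Ioc (0:ℝ) x)), 0 ≤ g t) :
    ENNReal.ofReal (((∫ t in (0:ℝ)..x, g t) / x) ^ p) ≤
      ENNReal.ofReal (q ^ (p-1)) * (ENNReal.ofReal (x ^ (1/p - 2)) *
        ∫⁻ t in Ioc (0:ℝ) x, ENNReal.ofReal (g t) ^ p * ENNReal.ofReal (t ^ (1/q))) := by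
  have hp1 := hpq.lt
  have hp0 : (0:ℝ) < p := hpq.pos
  have hq0 : (0:ℝ) < q := hpq.symm.pos
  have hq1 : (0:ℝ) < 1/q := by positivity
  have hgm : AEMeasurable g (volume.restrict (Ioc (0:ℝ) x)) :=
    hgi.aestronglyMeasurable.aemeasurable
  set u : ℝ := 1/(p*q) with hu
  have hu0 : 0 < u := by positivity
  have hup : u * p = 1/q := by rw [hu]; field_simp
  have huq : u * q = 1/p := by rw [hu]; field_simp
  -- the interval integral over Ioc
  have hFeq : (∫ t in (0:ℝ)..x, g t) = ∫ t in Ioc (0:ℝ) x, g t :=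
    intervalIntegral.integral_of_le hx.le
  have hFnn : 0 ≤ ∫ t in Ioc (0:ℝ) x, g t := integral_nonneg_of_ae hg0
  -- lintegral representation
  have hF : ENNReal.ofReal (∫ t in Ioc (0:ℝ) x, g t)
      = ∫⁻ t in Ioc (0:ℝ) x, ENNReal.ofReal (g t) :=
    ofReal_integral_eq_lintegral_ofReal hgi hg0
  -- Hölder
  set φ₁ : ℝ → ℝ≥0∞ := fun t => ENNReal.ofReal (g t) * ENNReal.ofReal (t ^ u) with hφ₁
  set φ₂ : ℝ → ℝ≥0∞ := fun t => ENNReal.ofReal (t ^ (-u)) with hφ₂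
  have hsplit : ∫⁻ t in Ioc (0:ℝ) x, ENNReal.ofReal (g t)
      = ∫⁻ t in Ioc (0:ℝ) x, φ₁ t * φ₂ t := by
    refine lintegral_congr_ae ?_
    filter_upwards [(ae_restrict_iff' measurableSet_Ioc).2 (ae_of_all _ (fun t ht => ht.1))]
      with t ht
    have h1 : ENNReal.ofReal (t ^ u) * ENNReal.ofReal (t ^ (-u)) = 1 := by
      rw [← ENNReal.ofReal_mul (by positivity), ← Real.rpow_add ht]
      simp
    rw [hφ₁, hφ₂, mul_assoc, h1, mul_one]
  have hm1 : AEMeasurable φ₁ (volume.restrict (Ioc (0:ℝ) x)) :=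
    hgm.ennreal_ofReal.mul ((measurable_id.pow_const u).ennreal_ofReal.aemeasurable)
  have hm2 : AEMeasurable φ₂ (volume.restrict (Ioc (0:ℝ) x)) :=
    ((measurable_id.pow_const (-u)).ennreal_ofReal.aemeasurable)
  have holder := ENNReal.lintegral_mul_le_Lp_mul_Lq (volume.restrict (Ioc (0:ℝ) x)) hpq hm1 hm2
  -- identify A
  have hA : (∫⁻ t in Ioc (0:ℝ) x, φ₁ t ^ p)
      = ∫⁻ t in Ioc (0:ℝ) x, ENNReal.ofReal (g t) ^ p * ENNReal.ofReal (t ^ (1/q)) := by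
    refine lintegral_congr_ae ?_
    filter_upwards [(ae_restrict_iff' measurableSet_Ioc).2 (ae_of_all _ (fun t ht => ht.1))]
      with t ht
    rw [hφ₁, ENNReal.mul_rpow_of_nonneg _ _ hp0.le,
      ENNReal.ofReal_rpow_of_pos (Real.rpow_pos_of_pos ht u),
      ← Real.rpow_mul ht.le, hup]
  -- identify B
  have hBreal : (∫ t in Ioc (0:ℝ) x, t ^ (-(1/p))) = q * x ^ (1/q) := by
    have h1 : (-(1/p)) + 1 = 1/q := by
      have := hpq.inv_add_inv_eq_one
      field_simp at this ⊢
      linarith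
    have h2 : (∫ t in (0:ℝ)..x, t ^ (-(1/p))) = (x ^ (1/q) - 0 ^ (1/q)) / (1/q) := by
      rw [integral_rpow (Or.inl (by have h := (div_lt_one hp0).2 hp1; linarith))]
      rw [h1]
    rw [← intervalIntegral.integral_of_le hx.le, h2, Real.zero_rpow (by positivity)]
    field_simp
    ring
  have hB : (∫⁻ t in Ioc (0:ℝ) x, φ₂ t ^ q) = ENNReal.ofReal (q * x ^ (1/q)) := by
    have heq : (∫⁻ t in Ioc (0:ℝ) x, φ₂ t ^ q)
        = ∫⁻ t in Ioc (0:ℝ) x, ENNReal.ofReal (t ^ (-(1/p))) := by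
      refine lintegral_congr_ae ?_
      filter_upwards [(ae_restrict_iff' measurableSet_Ioc).2 (ae_of_all _ (fun t ht => ht.1))]
        with t ht
      rw [hφ₂, ENNReal.ofReal_rpow_of_pos (Real.rpow_pos_of_pos ht _),
        ← Real.rpow_mul ht.le, neg_mul, huq]
    rw [heq, ← ofReal_integral_eq_lintegral_ofReal, hBreal]
    · exact (intervalIntegrable_iff_integrableOn_Ioc_of_le hx.le).1
        (intervalIntegral.intervalIntegrable_rpow' (by have h := (div_lt_one hp0).2 hp1; linarith))
    · filter_upwards [(ae_restrict_iff' measurableSet_Ioc).2 (ae_of_all _ (fun t ht => ht.1))]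
        with t ht
      positivity
  -- exponent identities
  have hinv : 1/p + 1/q = 1 := by
    have := hpq.inv_add_inv_eq_one; rw [one_div, one_div]; exact this
  have hqp1 : (1/q) * p = p - 1 := by have h := hinv; field_simp at h ⊢; linear_combination h
  have hexp : (1/q) * (p-1) + -p = 1/p - 2 := by
    have h1 : 1/q = 1 - 1/p := by linarith
    rw [h1]; field_simp; ring
  -- raise Hölder to the power p
  have hFP : ENNReal.ofReal ((∫ t in Ioc (0:ℝ) x, g t) ^ p)
      ≤ (∫⁻ t in Ioc (0:ℝ) x, φ₁ t ^ p) *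
        ENNReal.ofReal (q ^ (p-1) * x ^ ((1/q)*(p-1))) := by
    have h0 : ENNReal.ofReal ((∫ t in Ioc (0:ℝ) x, g t) ^ p)
        = (ENNReal.ofReal (∫ t in Ioc (0:ℝ) x, g t)) ^ p := by
      rw [ENNReal.ofReal_rpow_of_nonneg hFnn hp0.le]
    rw [h0, hF, hsplit]
    calc (∫⁻ t in Ioc (0:ℝ) x, φ₁ t * φ₂ t) ^ p
        ≤ ((∫⁻ t in Ioc (0:ℝ) x, φ₁ t ^ p) ^ (1/p) *
            (∫⁻ t in Ioc (0:ℝ) x, φ₂ t ^ q) ^ (1/q)) ^ p := by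
          exact ENNReal.rpow_le_rpow holder hp0.le
      _ = (∫⁻ t in Ioc (0:ℝ) x, φ₁ t ^ p) *
            ENNReal.ofReal (q ^ (p-1) * x ^ ((1/q)*(p-1))) := by
          rw [ENNReal.mul_rpow_of_nonneg _ _ hp0.le, ← ENNReal.rpow_mul,
            ← ENNReal.rpow_mul, one_div_mul_cancel hp0.ne', ENNReal.rpow_one,
            hqp1, hB, ENNReal.ofReal_rpow_of_nonneg (by positivity) (by linarith),
            Real.mul_rpow hq0.le (by positivity), ← Real.rpow_mul hx.le]
  -- final assembly
  rw [hFeq]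
  have hlhs : ENNReal.ofReal (((∫ t in Ioc (0:ℝ) x, g t) / x) ^ p)
      = ENNReal.ofReal ((∫ t in Ioc (0:ℝ) x, g t) ^ p) * ENNReal.ofReal (x ^ (-p)) := by
    rw [Real.div_rpow hFnn hx.le, Real.rpow_neg hx.le, div_eq_mul_inv,
      ← ENNReal.ofReal_mul (by positivity)]
  rw [hlhs, ← hA]
  calc ENNReal.ofReal ((∫ t in Ioc (0:ℝ) x, g t) ^ p) * ENNReal.ofReal (x ^ (-p))
      ≤ ((∫⁻ t in Ioc (0:ℝ) x, φ₁ t ^ p) *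
          ENNReal.ofReal (q ^ (p-1) * x ^ ((1/q)*(p-1)))) * ENNReal.ofReal (x ^ (-p)) :=
        mul_le_mul_left hFP _
    _ = ENNReal.ofReal (q ^ (p-1)) * (ENNReal.ofReal (x ^ (1/p - 2)) *
          ∫⁻ t in Ioc (0:ℝ) x, φ₁ t ^ p) := by
        rw [mul_assoc, ← ENNReal.ofReal_mul (by positivity), mul_assoc,
          ← Real.rpow_add hx, hexp, ENNReal.ofReal_mul (by positivity)]
        ring

/-- Hardy (1920): for `p > 1` and `f` absolutely continuous on `[0,∞)` with
`f(0) = 0` and `f' ≥ 0` a.e., one has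
`∫_0^∞ (f(x)/x)^p dx ≤ (p/(p-1))^p ∫_0^∞ f'(x)^p dx`. -/
theorem hardy_inequality
    (p : ℝ) (hp : 1 < p)
    (f g : ℝ → ℝ)
    (hgloc : ∀ x : ℝ, IntervalIntegrable g volume 0 x)
    (hf : ∀ x ≥ (0:ℝ), f x = ∫ t in (0:ℝ)..x, g t)
    (hg : ∀ᵐ x ∂(volume.restrict (Ioi (0:ℝ))), 0 ≤ g x) :
    (∫⁻ x in Ioi (0:ℝ), ENNReal.ofReal ((f x / x) ^ p)) ≤
      ENNReal.ofReal ((p / (p - 1)) ^ p) *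
        ∫⁻ x in Ioi (0:ℝ), ENNReal.ofReal (g x ^ p) := by
  set q : ℝ := p / (p - 1) with hqdef
  have hpq : p.HolderConjugate q := Real.HolderConjugate.conjExponent hp
  have hp0 : (0:ℝ) < p := hpq.pos
  have hq0 : (0:ℝ) < q := hpq.symm.pos
  have hinv : 1/p + 1/q = 1 := by
    have := hpq.inv_add_inv_eq_one; rw [one_div, one_div]; exact this
  set e : ℝ := 1/p - 2 with hedef
  have hp1 : 1/p < 1 := (div_lt_one hp0).2 hp
  have he : e < -1 := by rw [hedef]; linarith
  have he1 : e + 1 = -(1/q) := by rw [hedef]; linarith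
  -- a.e. measurability of g on (0,∞)
  have hgmeas : AEMeasurable g (volume.restrict (Ioi (0:ℝ))) := by
    have hU : Ioi (0:ℝ) = ⋃ n : ℕ, Ioc (0:ℝ) n := by
      ext y
      simp only [mem_Ioi, mem_iUnion, mem_Ioc]
      constructor
      · intro hy
        obtain ⟨n, hn⟩ := exists_nat_ge y
        exact ⟨n, hy, hn⟩
      · rintro ⟨n, hn, -⟩; exact hn
    rw [hU]
    refine aemeasurable_iUnion_iff.2 fun n => ?_
    exact ((intervalIntegrable_iff_integrableOn_Ioc_of_le
      (by positivity : (0:ℝ) ≤ (n:ℝ))).1 (hgloc n)).aestronglyMeasurable.aemeasurable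
  set h : ℝ → ℝ≥0∞ := fun t => ENNReal.ofReal (g t) ^ p * ENNReal.ofReal (t ^ (1/q))
    with hhdef
  have hhm : AEMeasurable h (volume.restrict (Ioi (0:ℝ))) :=
    (hgmeas.ennreal_ofReal.pow_const p).mul
      ((measurable_id.pow_const (1/q)).ennreal_ofReal.aemeasurable)
  have hhne : ∀ t, h t ≠ ⊤ := fun t =>
    ENNReal.mul_ne_top (ENNReal.rpow_ne_top_of_nonneg hp0.le ENNReal.ofReal_ne_top)
      ENNReal.ofReal_ne_top
  -- Step 1 : pointwise bound
  have step1 : (∫⁻ x in Ioi (0:ℝ), ENNReal.ofReal ((f x / x) ^ p)) ≤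
      ENNReal.ofReal (q ^ (p-1)) *
        ∫⁻ x in Ioi (0:ℝ), ENNReal.ofReal (x ^ e) * ∫⁻ t in Ioc (0:ℝ) x, h t := by
    rw [← lintegral_const_mul' _ _ ENNReal.ofReal_ne_top]
    refine lintegral_mono_ae ?_
    filter_upwards [(ae_restrict_iff' measurableSet_Ioi).2 (ae_of_all _ (fun x hx => hx))]
      with x hx
    rw [hf x hx.le]
    exact hardy_pointwise hpq hx
      ((intervalIntegrable_iff_integrableOn_Ioc_of_le hx.le).1 (hgloc x))
      (ae_restrict_of_ae_restrict_of_subset Ioc_subset_Ioi_self hg)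
  -- Step 2 : Tonelli
  set F : ℝ → ℝ → ℝ≥0∞ := fun x t =>
    ENNReal.ofReal (x ^ e) * (Iic x).indicator h t with hFdef
  have hrep : ∀ x : ℝ,
      ENNReal.ofReal (x ^ e) * (∫⁻ t in Ioc (0:ℝ) x, h t) = ∫⁻ t in Ioi (0:ℝ), F x t := by
    intro x
    rw [hFdef]
    rw [lintegral_const_mul' _ _ ENNReal.ofReal_ne_top,
      lintegral_indicator measurableSet_Iic,
      Measure.restrict_restrict measurableSet_Iic, Set.inter_comm, Set.Ioi_inter_Iic]
  have hFm : AEMeasurable (Function.uncurry F)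
      ((volume.restrict (Ioi (0:ℝ))).prod (volume.restrict (Ioi (0:ℝ)))) := by
    have h1 : AEMeasurable (fun z : ℝ × ℝ => h z.2)
        ((volume.restrict (Ioi (0:ℝ))).prod (volume.restrict (Ioi (0:ℝ)))) :=
      hhm.comp_quasiMeasurePreserving Measure.quasiMeasurePreserving_snd
    have h2 : MeasurableSet {z : ℝ × ℝ | z.2 ≤ z.1} :=
      measurableSet_le measurable_snd measurable_fst
    have h3 : Function.uncurry F = fun z : ℝ × ℝ =>
        ENNReal.ofReal (z.1 ^ e) * ({z : ℝ × ℝ | z.2 ≤ z.1}).indicator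
          (fun z => h z.2) z := by
      funext z
      simp [Function.uncurry, hFdef, Set.indicator_apply]
    rw [h3]
    exact ((measurable_fst.pow_const e).ennreal_ofReal.aemeasurable).mul (h1.indicator h2)
  have swap : (∫⁻ x in Ioi (0:ℝ), ∫⁻ t in Ioi (0:ℝ), F x t)
      = ∫⁻ t in Ioi (0:ℝ), ∫⁻ x in Ioi (0:ℝ), F x t :=
    lintegral_lintegral_swap hFm
  -- Step 3 : inner integral computation
  have inner : ∀ t : ℝ, 0 < t →
      (∫⁻ x in Ioi (0:ℝ), F x t) = h t * ENNReal.ofReal (q * t ^ (-(1/q))) := by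
    intro t ht
    have hIci : Ici t ∩ Ioi (0:ℝ) = Ici t := by
      refine Set.inter_eq_left.2 fun y hy => lt_of_lt_of_le ht hy
    have hF2 : ∀ x : ℝ, F x t = (Ici t).indicator (fun x => ENNReal.ofReal (x ^ e) * h t) x := by
      intro x
      by_cases hxt : t ≤ x <;>
        simp [hFdef, Set.indicator_apply, hxt]
    calc (∫⁻ x in Ioi (0:ℝ), F x t)
        = ∫⁻ x in Ici t, ENNReal.ofReal (x ^ e) * h t := by
          simp_rw [hF2]
          rw [lintegral_indicator measurableSet_Ici,
            Measure.restrict_restrict measurableSet_Ici, hIci]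
      _ = (∫⁻ x in Ici t, ENNReal.ofReal (x ^ e)) * h t :=
          lintegral_mul_const' _ _ (hhne t)
      _ = ENNReal.ofReal (q * t ^ (-(1/q))) * h t := by
          rw [← restrict_Ioi_eq_restrict_Ici,
            ← ofReal_integral_eq_lintegral_ofReal (integrableOn_Ioi_rpow_of_lt he ht)
              ((ae_restrict_iff' measurableSet_Ioi).2 (ae_of_all _ (fun y hy =>
                Real.rpow_nonneg (le_of_lt (lt_trans ht hy)) e))),
            integral_Ioi_rpow_of_lt he ht, he1]
          congr 1
          field_simp
      _ = h t * ENNReal.ofReal (q * t ^ (-(1/q))) := mul_comm _ _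
  -- Step 4 : simplify the t-integral
  have step4 : (∫⁻ t in Ioi (0:ℝ), ∫⁻ x in Ioi (0:ℝ), F x t)
      = ENNReal.ofReal q * ∫⁻ t in Ioi (0:ℝ), ENNReal.ofReal (g t ^ p) := by
    rw [← lintegral_const_mul' _ _ ENNReal.ofReal_ne_top]
    refine lintegral_congr_ae ?_
    filter_upwards [(ae_restrict_iff' measurableSet_Ioi).2 (ae_of_all _ (fun t ht => ht)), hg]
      with t ht hgt
    rw [inner t ht, hhdef]
    have hcancel : ENNReal.ofReal (t ^ (1/q)) * ENNReal.ofReal (q * t ^ (-(1/q)))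
        = ENNReal.ofReal q := by
      rw [← ENNReal.ofReal_mul (Real.rpow_nonneg ht.le _)]
      rw [show t ^ (1/q) * (q * t ^ (-(1/q))) = q * (t ^ (1/q) * t ^ (-(1/q))) by ring,
        ← Real.rpow_add ht]
      simp
    rw [mul_assoc, hcancel, ← ENNReal.ofReal_rpow_of_nonneg hgt hp0.le]
    ring
  -- put everything together
  refine le_trans step1 ?_
  simp_rw [hrep]
  rw [swap, step4, ← mul_assoc, ← ENNReal.ofReal_mul (by positivity)]
  have hq' : p - 1 + 1 = p := by ring
  have : q ^ (p - 1) * q = q ^ p := by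
    conv_rhs => rw [← hq', Real.rpow_add_one hq0.ne']
  rw [this]
end

section
/- (Landau: optimality of the Hardy constant) Let p > 1. For every constant A < (p/(p−1))^p there exists an absolutely continuous f : [0,∞) → ℝ with f(0) = 0, f' ≥ 0 almost everywhere and 0 < ∫_0^∞ f'(x)^p dx < ∞, such that ∫_0^∞ (f(x)/x)^p dx > A ∫_0^∞ f'(x)^p dx. -/
open MeasureTheory Set Real

set_option maxHeartbeats 2000000 in
/-- Landau (1926): optimality of the constant `(p/(p-1))^p` in Hardy's inequality.
For `p > 1` and every `A < (p/(p-1))^p` there is an absolutely continuous `f` with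
`f(0) = 0`, `f' ≥ 0` a.e. and `0 < ∫_0^∞ f'^p < ∞`, such that
`∫_0^∞ (f(x)/x)^p dx > A ∫_0^∞ f'^p dx`. -/
theorem landau_hardy_optimal
    (p : ℝ) (hp : 1 < p)
    (A : ℝ) (hA : A < (p / (p - 1)) ^ p) :
    ∃ f g : ℝ → ℝ,
      (∀ x : ℝ, IntervalIntegrable g volume 0 x) ∧
      (∀ x ≥ (0:ℝ), f x = ∫ t in (0:ℝ)..x, g t) ∧
      (∀ᵐ x ∂(volume.restrict (Ioi (0:ℝ))), 0 ≤ g x) ∧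
      IntegrableOn (fun x => g x ^ p) (Ioi 0) ∧
      (0 < ∫ x in Ioi (0:ℝ), g x ^ p) ∧
      A * (∫ x in Ioi (0:ℝ), g x ^ p) < ∫ x in Ioi (0:ℝ), (f x / x) ^ p := by
  have hp0 : (0:ℝ) < p := lt_trans one_pos hp
  have hp1 : (0:ℝ) < p - 1 := by linarith
  set L : ℝ := (p / (p - 1)) ^ p with hLdef
  have hL : 0 < L := Real.rpow_pos_of_pos (div_pos hp0 hp1) p
  -- Step 1: choose s ∈ (0,1) with A < L * (1-s)^p
  obtain ⟨s, hs0, hs1, hsA⟩ : ∃ s : ℝ, 0 < s ∧ s < 1 ∧ A < L * (1 - s) ^ p := by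
    have hcont : ContinuousAt (fun u : ℝ => L * (1 - u) ^ p) 0 := by
      have h1 : ContinuousAt (fun u : ℝ => (1 - u)) 0 := by fun_prop
      have h2 : ContinuousAt (fun y : ℝ => y ^ p) ((fun u : ℝ => (1 - u)) 0) := by
        simp only [sub_zero]
        exact Real.continuousAt_rpow_const 1 p (Or.inl one_ne_zero)
      exact continuousAt_const.mul (h2.comp h1)
    have hval : L * (1 - (0:ℝ)) ^ p = L := by simp [Real.one_rpow]
    have hev : ∀ᶠ u in nhds (0:ℝ), A < L * (1 - u) ^ p := by
      have := hcont.tendsto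
      rw [hval] at this
      exact this.eventually (eventually_gt_nhds hA)
    have hev1 : ∀ᶠ u in nhds (0:ℝ), u < 1 := eventually_lt_nhds one_pos
    have : ∀ᶠ u in nhdsWithin (0:ℝ) (Ioi 0),
        (0 < u ∧ u < 1) ∧ A < L * (1 - u) ^ p := by
      filter_upwards [self_mem_nhdsWithin,
        (hev.and hev1).filter_mono nhdsWithin_le_nhds] with u hu h2
      exact ⟨⟨hu, h2.2⟩, h2.1⟩
    obtain ⟨s, ⟨h1, h2⟩, h3⟩ := this.exists
    exact ⟨s, h1, h2, h3⟩
  set X : ℝ := s ^ (-(2 * p / (p - 1))) with hXdef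
  have hX0 : 0 < X := Real.rpow_pos_of_pos hs0 _
  have hX1 : 1 ≤ X := by
    rw [hXdef]
    apply Real.one_le_rpow_of_pos_of_le_one_of_nonpos hs0 hs1.le
    have : 0 < 2 * p / (p - 1) := by positivity
    linarith
  set c0 : ℝ := L * (1 - s) ^ p with hc0def
  have hc00 : 0 < c0 := mul_pos hL (Real.rpow_pos_of_pos (by linarith) p)
  -- Step 2: choose δ
  obtain ⟨δ, hδ0, hδhalf, hAδ⟩ :
      ∃ δ : ℝ, 0 < δ ∧ δ ≤ (p - 1) / 2 ∧ A < c0 * X ^ (-δ) := by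
    have hXc : Continuous (fun d : ℝ => c0 * X ^ (-d)) := by
      have he : (fun d : ℝ => X ^ (-d)) = fun d => Real.exp (Real.log X * (-d)) :=
        funext fun d => Real.rpow_def_of_pos hX0 _
      exact continuous_const.mul (by rw [he]; fun_prop)
    have hval : c0 * X ^ (-(0:ℝ)) = c0 := by simp [Real.rpow_zero]
    have hev : ∀ᶠ d in nhds (0:ℝ), A < c0 * X ^ (-d) := by
      have := hXc.continuousAt (x := (0:ℝ)).tendsto
      rw [hval] at this
      exact this.eventually (eventually_gt_nhds hsA)
    have hev1 : ∀ᶠ d in nhds (0:ℝ), d < (p - 1) / 2 := eventually_lt_nhds (by linarith)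
    have : ∀ᶠ d in nhdsWithin (0:ℝ) (Ioi 0),
        (0 < d ∧ d < (p - 1) / 2) ∧ A < c0 * X ^ (-d) := by
      filter_upwards [self_mem_nhdsWithin,
        (hev.and hev1).filter_mono nhdsWithin_le_nhds] with d hd h2
      exact ⟨⟨hd, h2.2⟩, h2.1⟩
    obtain ⟨d, ⟨h1, h2⟩, h3⟩ := this.exists
    exact ⟨d, h1, h2.le, h3⟩
  -- basic exponent facts
  set a : ℝ := (1 + δ) / p with hadef
  set b : ℝ := (p - 1 - δ) / p with hbdef
  have hδp : δ < p - 1 := by linarith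
  have ha0 : 0 < a := by positivity
  have hb0 : 0 < b := div_pos (by linarith) hp0
  have ha1 : a < 1 := by rw [hadef, div_lt_one hp0]; linarith
  have hab : -a + 1 = b := by rw [hadef, hbdef]; field_simp; linarith
  have hap : -a * p = -(1 + δ) := by rw [hadef]; field_simp
  have hbp : (b - 1) * p = -(1 + δ) := by rw [hbdef]; field_simp; linarith
  have hble : b ≤ (p - 1) / p := by
    rw [hbdef, div_le_div_iff₀ hp0 hp0]
    nlinarith
  -- the functions
  set g : ℝ → ℝ := fun t => if 1 ≤ t then t ^ (-a) else 0 with hgdef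
  set f : ℝ → ℝ := fun x => ∫ t in (0:ℝ)..x, g t with hfdef
  have hg_nonneg : ∀ t, 0 ≤ g t := by
    intro t
    by_cases h : 1 ≤ t
    · simp only [hgdef, if_pos h]
      exact Real.rpow_nonneg (by linarith) _
    · simp [hgdef, if_neg h]
  have hg_le_one : ∀ t, g t ≤ 1 := by
    intro t
    by_cases h : 1 ≤ t
    · simp only [hgdef, if_pos h]
      exact Real.rpow_le_one_of_one_le_of_nonpos h (by linarith)
    · simp [hgdef, if_neg h]
  have hg_meas : Measurable g := by
    apply Measurable.ite (measurableSet_le measurable_const measurable_id)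
    · fun_prop
    · exact measurable_const
  have hgInt : ∀ u v : ℝ, IntervalIntegrable g volume u v := by
    intro u v
    apply (intervalIntegrable_const (c := (1:ℝ))).mono_fun
      hg_meas.aestronglyMeasurable
    apply Filter.Eventually.of_forall
    intro t
    simp only [Real.norm_eq_abs, abs_one]
    rw [abs_of_nonneg (hg_nonneg t)]
    exact hg_le_one t
  have hne1 : ∀ᵐ t : ℝ, t ≠ (1:ℝ) := by
    rw [ae_iff]
    simpa using measure_singleton (1:ℝ)
  have hf0 : ∀ x : ℝ, x ≤ 1 → f x = 0 := by
    intro x hx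
    show (∫ t in (0:ℝ)..x, g t) = 0
    have : ∫ t in (0:ℝ)..x, g t = ∫ t in (0:ℝ)..x, (0:ℝ) := by
      apply intervalIntegral.integral_congr_ae
      filter_upwards [hne1] with t ht htmem
      have hle : t ≤ 1 := by
        rcases Set.mem_uIoc.mp htmem with h | h
        · exact le_trans h.2 hx
        · linarith [h.2]
      have ht1 : t < 1 := lt_of_le_of_ne hle ht
      simp only [hgdef]
      exact if_neg (not_le.mpr ht1)
    rw [this, intervalIntegral.integral_zero]
  have hf1 : ∀ x : ℝ, 1 ≤ x → f x = (x ^ b - 1) / b := by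
    intro x hx
    have hsplit : f x = (∫ t in (0:ℝ)..1, g t) + ∫ t in (1:ℝ)..x, g t :=
      (intervalIntegral.integral_add_adjacent_intervals (hgInt 0 1) (hgInt 1 x)).symm
    have h01 : (∫ t in (0:ℝ)..1, g t) = 0 := hf0 1 le_rfl
    have h1x : (∫ t in (1:ℝ)..x, g t) = ∫ t in (1:ℝ)..x, t ^ (-a) := by
      apply intervalIntegral.integral_congr
      intro t ht
      rw [Set.uIcc_of_le hx] at ht
      simp only [hgdef]
      exact if_pos ht.1
    rw [hsplit, h01, h1x, integral_rpow (Or.inl (by linarith : (-1:ℝ) < -a)), zero_add]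
    rw [Real.one_rpow, hab]
  -- the power of g
  set G : ℝ → ℝ := fun t => if 1 ≤ t then t ^ (-(1 + δ)) else 0 with hGdef
  have h_gp : Set.EqOn (fun t => g t ^ p) G (Ioi 0) := by
    intro t ht
    simp only [hgdef, hGdef]
    split
    · rw [← Real.rpow_mul (le_of_lt ht), hap]
    · exact Real.zero_rpow (by positivity)
  
  have hδ1 : -(1 + δ) < -1 := by linarith
  have hGInt1 : IntegrableOn G (Ioi 1) := by
    apply (integrableOn_Ioi_rpow_of_lt hδ1 one_pos).congr_fun ?_ measurableSet_Ioi
    intro x hx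
    simp only [hGdef]
    rw [if_pos (le_of_lt hx)]
  have hGae : G =ᵐ[volume.restrict (Ioc (0:ℝ) 1)] 0 := by
    filter_upwards [ae_restrict_of_ae hne1, ae_restrict_mem measurableSet_Ioc]
      with t ht htmem
    have htlt : t < 1 := lt_of_le_of_ne htmem.2 ht
    simp only [hGdef, Pi.zero_apply]
    exact if_neg (not_le.mpr htlt)
  have hGInt01 : IntegrableOn G (Ioc 0 1) := (integrableOn_zero).congr hGae.symm
  have hIntOn : IntegrableOn (fun x => g x ^ p) (Ioi 0) := by
    have hGInt : IntegrableOn G (Ioi 0) := by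
      rw [← Ioc_union_Ioi_eq_Ioi (zero_le_one (α := ℝ))]
      exact hGInt01.union hGInt1
    exact hGInt.congr_fun h_gp.symm measurableSet_Ioi
  have hI : (∫ x in Ioi (0:ℝ), g x ^ p) = 1 / δ := by
    rw [setIntegral_congr_fun measurableSet_Ioi h_gp]
    rw [← Ioc_union_Ioi_eq_Ioi (zero_le_one (α := ℝ)),
      setIntegral_union (Ioc_disjoint_Ioi le_rfl) measurableSet_Ioi hGInt01 hGInt1]
    have h1 : (∫ x in Ioc (0:ℝ) 1, G x) = 0 := by
      rw [integral_congr_ae hGae]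
      simp
    have h2 : (∫ x in Ioi (1:ℝ), G x) = 1 / δ := by
      rw [setIntegral_congr_fun measurableSet_Ioi
        (fun x (hx : x ∈ Ioi (1:ℝ)) => by simp only [hGdef]; rw [if_pos (le_of_lt hx)])]
      rw [integral_Ioi_rpow_of_lt hδ1 one_pos, show -(1+δ)+1 = -δ by ring,
        Real.one_rpow, neg_div_neg_eq]
    rw [h1, h2, zero_add]
  -- the function (f x / x)^p
  have hFIoc : ∀ x ∈ Ioc (0:ℝ) 1, (f x / x) ^ p = 0 := by
    intro x hx
    rw [hf0 x hx.2, zero_div, Real.zero_rpow (ne_of_gt hp0)]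
  set φ : ℝ → ℝ := fun x => ((x ^ b - 1) / (b * x)) ^ p with hφdef
  have hFeq : ∀ x : ℝ, 1 ≤ x → (f x / x) ^ p = φ x := by
    intro x hx
    simp only [hφdef]
    rw [hf1 x hx, div_div]
  have hφ_nonneg : ∀ x : ℝ, 1 ≤ x → 0 ≤ (x ^ b - 1) / (b * x) := by
    intro x hx
    have hx0 : (0:ℝ) < x := lt_of_lt_of_le one_pos hx
    apply div_nonneg _ (by positivity)
    have h1 : (1:ℝ) ≤ x ^ b := Real.one_le_rpow hx hb0.le
    linarith
  have hφmeas : Measurable φ := by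
    simp only [hφdef]
    fun_prop
  have hkey : ∀ c : ℝ, 0 ≤ c → ∀ x : ℝ, 0 < x →
      ((c * x ^ b) / (b * x)) ^ p = (c / b) ^ p * x ^ (-(1+δ)) := by
    intro c hc x hx
    have h1 : (c * x ^ b) / (b * x) = (c / b) * x ^ (b - 1) := by
      rw [Real.rpow_sub hx, Real.rpow_one]
      field_simp
    rw [h1, Real.mul_rpow (div_nonneg hc hb0.le) (Real.rpow_nonneg hx.le _),
      ← Real.rpow_mul hx.le, hbp]
  have hφle : ∀ x : ℝ, 1 ≤ x → φ x ≤ (1/b) ^ p * x ^ (-(1+δ)) := by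
    intro x hx
    have hx0 : (0:ℝ) < x := lt_of_lt_of_le one_pos hx
    have h1 : φ x ≤ ((1 * x ^ b) / (b * x)) ^ p := by
      simp only [hφdef]
      apply Real.rpow_le_rpow (hφ_nonneg x hx) _ hp0.le
      apply (div_le_div_iff_of_pos_right (by positivity)).mpr
      rw [one_mul]
      linarith
    calc φ x ≤ ((1 * x ^ b) / (b * x)) ^ p := h1
      _ = (1/b) ^ p * x ^ (-(1+δ)) := hkey 1 zero_le_one x hx0
  have hmajInt : IntegrableOn (fun x : ℝ => (1/b) ^ p * x ^ (-(1+δ))) (Ioi 1) :=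
    (integrableOn_Ioi_rpow_of_lt hδ1 one_pos).const_mul _
  have hφInt : IntegrableOn φ (Ioi 1) := by
    apply MeasureTheory.Integrable.mono hmajInt hφmeas.aestronglyMeasurable
    filter_upwards [ae_restrict_mem measurableSet_Ioi] with x hx
    have hx1 : (1:ℝ) ≤ x := le_of_lt hx
    have hx0 : (0:ℝ) < x := lt_of_lt_of_le one_pos hx1
    rw [Real.norm_eq_abs, Real.norm_eq_abs,
      abs_of_nonneg (by simp only [hφdef]; exact Real.rpow_nonneg (hφ_nonneg x hx1) _),
      abs_of_nonneg (mul_nonneg (Real.rpow_nonneg (by positivity) _)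
        (Real.rpow_nonneg hx0.le _))]
    exact hφle x hx1
  have hFInt : IntegrableOn (fun x => (f x / x) ^ p) (Ioi 0) := by
    rw [← Ioc_union_Ioi_eq_Ioi (zero_le_one (α := ℝ))]
    apply IntegrableOn.union
    · exact (integrableOn_zero).congr_fun
        (fun x hx => (hFIoc x hx).symm) measurableSet_Ioc
    · exact hφInt.congr_fun (fun x hx => (hFeq x (le_of_lt hx)).symm) measurableSet_Ioi
  have hFnonneg : ∀ x ∈ Ioi (0:ℝ), 0 ≤ (f x / x) ^ p := by
    intro x hx
    rcases le_or_gt x 1 with h | h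
    · rw [hFIoc x ⟨hx, h⟩]
    · rw [hFeq x h.le]
      simp only [hφdef]
      exact Real.rpow_nonneg (hφ_nonneg x h.le) _
  have hmono1 : (∫ x in Ioi X, (f x / x) ^ p) ≤ ∫ x in Ioi (0:ℝ), (f x / x) ^ p := by
    apply setIntegral_mono_set hFInt
    · filter_upwards [ae_restrict_mem measurableSet_Ioi] with x hx using hFnonneg x hx
    · exact HasSubset.Subset.eventuallyLE (Ioi_subset_Ioi hX0.le)
  set c1 : ℝ := ((1 - X ^ (-b)) / b) ^ p with hc1def
  have hXble : X ^ (-b) ≤ 1 := Real.rpow_le_one_of_one_le_of_nonpos hX1 (by linarith)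
  have hXs : X ^ (-b) ≤ s := by
    have hexp : (1:ℝ) ≤ 2 * p / (p - 1) * b := by
      rw [hbdef]
      have h2 : 2 * p / (p - 1) * ((p - 1 - δ) / p) = 2 * (p - 1 - δ) / (p - 1) := by
        field_simp
      rw [h2, le_div_iff₀ hp1]
      linarith
    have h3 : X ^ (-b) = s ^ (2 * p / (p - 1) * b) := by
      rw [hXdef, ← Real.rpow_mul hs0.le]
      congr 1
      ring
    rw [h3]
    calc s ^ (2 * p / (p - 1) * b) ≤ s ^ (1:ℝ) :=
          Real.rpow_le_rpow_of_exponent_ge hs0 hs1.le hexp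
      _ = s := Real.rpow_one s
  have hlow : ∀ x ∈ Ioi X, c1 * x ^ (-(1+δ)) ≤ (f x / x) ^ p := by
    intro x hx
    have hxX : X ≤ x := le_of_lt hx
    have hx1 : (1:ℝ) ≤ x := le_trans hX1 hxX
    have hx0 : (0:ℝ) < x := lt_of_lt_of_le one_pos hx1
    rw [hFeq x hx1]
    have h1 : (1:ℝ) ≤ X ^ (-b) * x ^ b := by
      have hdiv : (1:ℝ) ≤ (x / X) ^ b :=
        Real.one_le_rpow ((one_le_div hX0).mpr hxX) hb0.le
      rw [Real.div_rpow hx0.le hX0.le] at hdiv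
      rw [Real.rpow_neg hX0.le, inv_mul_eq_div]
      exact hdiv
    have hbase : (1 - X ^ (-b)) * x ^ b ≤ x ^ b - 1 := by nlinarith
    have h2 : c1 * x ^ (-(1+δ)) = (((1 - X ^ (-b)) * x ^ b) / (b * x)) ^ p := by
      rw [hkey (1 - X ^ (-b)) (by linarith) x hx0, hc1def]
    rw [h2]
    simp only [hφdef]
    apply Real.rpow_le_rpow _ _ hp0.le
    · exact div_nonneg (mul_nonneg (by linarith) (Real.rpow_nonneg hx0.le _))
        (by positivity)
    · exact (div_le_div_iff_of_pos_right (by positivity)).mpr hbase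
  have hmono2 : (∫ x in Ioi X, c1 * x ^ (-(1+δ))) ≤ ∫ x in Ioi X, (f x / x) ^ p := by
    apply setIntegral_mono_on
    · exact (integrableOn_Ioi_rpow_of_lt hδ1 hX0).const_mul _
    · exact hFInt.mono_set (Ioi_subset_Ioi hX0.le)
    · exact measurableSet_Ioi
    · exact hlow
  have hval2 : (∫ x in Ioi X, c1 * x ^ (-(1+δ))) = c1 * (X ^ (-δ) / δ) := by
    rw [MeasureTheory.integral_const_mul, integral_Ioi_rpow_of_lt hδ1 hX0,
      show -(1+δ)+1 = -δ by ring, neg_div_neg_eq]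
  have hc01 : c0 ≤ c1 := by
    rw [hc0def, hc1def, hLdef,
      ← Real.mul_rpow (by positivity) (by linarith : (0:ℝ) ≤ 1 - s)]
    apply Real.rpow_le_rpow _ _ hp0.le
    · exact mul_nonneg (div_nonneg hp0.le hp1.le) (by linarith)
    · have h1 : 1 - s ≤ 1 - X ^ (-b) := by linarith
      have h2 : p / (p - 1) ≤ 1 / b := by
        rw [div_le_div_iff₀ hp1 hb0, hbdef]
        have hpb : p * ((p - 1 - δ) / p) = p - 1 - δ := by field_simp
        rw [hpb]
        linarith
      calc p / (p - 1) * (1 - s) ≤ (1 / b) * (1 - X ^ (-b)) :=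
            mul_le_mul h2 h1 (by linarith) (one_div_nonneg.mpr hb0.le)
        _ = (1 - X ^ (-b)) / b := by ring
  refine ⟨f, g, fun x => hgInt 0 x, fun x _ => rfl, ae_of_all _ hg_nonneg, hIntOn, ?_, ?_⟩
  · rw [hI]
    positivity
  · rw [hI]
    calc A * (1 / δ) < (c0 * X ^ (-δ)) * (1 / δ) :=
          mul_lt_mul_of_pos_right hAδ (by positivity)
      _ ≤ (c1 * X ^ (-δ)) * (1 / δ) := by
          apply mul_le_mul_of_nonneg_right
            (mul_le_mul_of_nonneg_right hc01 (Real.rpow_nonneg hX0.le _)) (by positivity)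
      _ = c1 * (X ^ (-δ) / δ) := by ring
      _ = ∫ x in Ioi X, c1 * x ^ (-(1+δ)) := hval2.symm
      _ ≤ ∫ x in Ioi X, (f x / x) ^ p := hmono2
      _ ≤ ∫ x in Ioi (0:ℝ), (f x / x) ^ p := hmono1
end

section
/- Let γ > 1 and consider the birth-death process with b_0 = 1 and a_i = b_i = i^γ for i ≥ 1. Then the spectral gap λ₁ is strictly positive if and only if γ ≥ 2. -/
open MeasureTheory Set Real

open MeasureTheory Set Real

open Finset in
private lemma hardy_key (a : ℕ → ℝ) (N : ℕ) :
    ((∑ k ∈ range (N+1), a k) / (N+1 : ℝ))^2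
      + (∑ k ∈ range (N+1), a k)^2 / (N+1 : ℝ)
      - (∑ k ∈ range N, a k)^2 / (N : ℝ)
    ≤ 2 * ((∑ k ∈ range (N+1), a k) / (N+1 : ℝ)) * a N := by
  have hS1 : ∑ k ∈ range (N+1), a k = (∑ k ∈ range N, a k) + a N := sum_range_succ a N
  rw [hS1]
  rcases Nat.eq_zero_or_pos N with h0 | hNpos
  · subst h0
    simp only [Nat.cast_zero, zero_add, sum_range_zero, div_zero, div_one, sub_zero]
    nlinarith [sq_nonneg (a 0)]
  · have hν : (0:ℝ) < (N:ℝ) := by exact_mod_cast hNpos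
    have hν1 : (0:ℝ) < (N:ℝ) + 1 := by linarith
    set S := ∑ k ∈ range N, a k with hS
    set α : ℝ := (S + a N)/((N:ℝ)+1) with hα
    set β : ℝ := S/(N:ℝ) with hβ
    have h1 : (S + a N)^2/((N:ℝ)+1) = ((N:ℝ)+1)*α^2 := by
      rw [hα]; field_simp
    have h2 : S^2/(N:ℝ) = (N:ℝ)*β^2 := by
      rw [hβ]; field_simp
    have h3 : a N = ((N:ℝ)+1)*α - (N:ℝ)*β := by
      rw [hα, hβ]; field_simp; ring
    rw [h1, h2, h3]
    nlinarith [sq_nonneg (α - β), hν]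

open Finset in
private lemma hardy_aux (a : ℕ → ℝ) (N : ℕ) :
    ∑ i ∈ range N, ((∑ k ∈ range (i+1), a k) / (i+1 : ℝ))^2
      + (∑ k ∈ range N, a k)^2 / N
    ≤ 2 * ∑ i ∈ range N, ((∑ k ∈ range (i+1), a k) / (i+1 : ℝ)) * a i := by
  induction N with
  | zero => simp
  | succ N ih =>
    rw [sum_range_succ (fun i => ((∑ k ∈ range (i+1), a k) / (i+1 : ℝ))^2),
      sum_range_succ (fun i => ((∑ k ∈ range (i+1), a k) / (i+1 : ℝ)) * a i)]
    have := hardy_key a N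
    push_cast at this ⊢
    linarith

open Finset in
private lemma hardy_finite (a : ℕ → ℝ) (N : ℕ) :
    ∑ i ∈ range N, ((∑ k ∈ range (i+1), a k) / (i+1 : ℝ))^2
      ≤ 4 * ∑ k ∈ range N, (a k)^2 := by
  have hTnn : (0:ℝ) ≤ ∑ i ∈ range N, ((∑ k ∈ range (i+1), a k) / (i+1 : ℝ))^2 :=
    sum_nonneg fun i _ => sq_nonneg _
  have hYnn : (0:ℝ) ≤ ∑ k ∈ range N, (a k)^2 := sum_nonneg fun i _ => sq_nonneg _
  have h1 := hardy_aux a N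
  have hnn : (0:ℝ) ≤ (∑ k ∈ range N, a k)^2 / N := by positivity
  have h2 : (∑ i ∈ range N, ((∑ k ∈ range (i+1), a k) / (i+1 : ℝ)) * a i)^2
      ≤ (∑ i ∈ range N, ((∑ k ∈ range (i+1), a k) / (i+1 : ℝ))^2)
        * (∑ k ∈ range N, (a k)^2) :=
    Finset.sum_mul_sq_le_sq_mul_sq (range N) _ _
  nlinarith [h1, h2, hTnn, hYnn, hnn]

set_option maxHeartbeats 1000000 in
/-- Chen (1996): for the birth-death process with `b₀ = 1`, `aᵢ = bᵢ = i^γ`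
(`i ≥ 1`, `γ > 1`), the spectral gap `λ₁` is strictly positive iff `γ ≥ 2`. -/
theorem spectral_gap_positive_iff_power_rates
    (γ : ℝ) (hγ : 1 < γ)
    (b a : ℕ → ℝ)
    (hb0 : b 0 = 1)
    (hbi : ∀ i : ℕ, 1 ≤ i → b i = (i : ℝ) ^ γ)
    (hai : ∀ i : ℕ, 1 ≤ i → a i = (i : ℝ) ^ γ)
    (mu : ℕ → ℝ) (hmu0 : mu 0 = 1)
    (hmurec : ∀ n, mu (n + 1) = mu n * b n / a (n + 1))
    (hmusum : Summable mu)
    (Z : ℝ) (hZ : Z = ∑' n, mu n)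
    (pi : ℕ → ℝ) (hpi : ∀ i, pi i = mu i / Z)
    (lam1 : ℝ)
    (hlam1 : lam1 = sInf { r : ℝ | ∃ f : ℕ → ℝ,
      Summable (fun i => pi i * f i) ∧ (∑' i, pi i * f i) = 0 ∧
      Summable (fun i => pi i * f i ^ 2) ∧ (∑' i, pi i * f i ^ 2) = 1 ∧
      Summable (fun i => pi i * b i * (f (i + 1) - f i) ^ 2) ∧
      r = ∑' i, pi i * b i * (f (i + 1) - f i) ^ 2 }) :
    0 < lam1 ↔ 2 ≤ γ := by
  set S := { r : ℝ | ∃ f : ℕ → ℝ,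
      Summable (fun i => pi i * f i) ∧ (∑' i, pi i * f i) = 0 ∧
      Summable (fun i => pi i * f i ^ 2) ∧ (∑' i, pi i * f i ^ 2) = 1 ∧
      Summable (fun i => pi i * b i * (f (i + 1) - f i) ^ 2) ∧
      r = ∑' i, pi i * b i * (f (i + 1) - f i) ^ 2 } with hS
  -- basic positivity facts
  have hb_pos : ∀ i, 0 < b i := by
    intro i
    rcases Nat.eq_zero_or_pos i with h | h
    · rw [h, hb0]; norm_num
    · rw [hbi i h]
      exact Real.rpow_pos_of_pos (by exact_mod_cast h) γ
  have ha_pos : ∀ i, 1 ≤ i → 0 < a i := by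
    intro i h
    rw [hai i h]
    exact Real.rpow_pos_of_pos (by exact_mod_cast h) γ
  have hmu_pos : ∀ n, 0 < mu n := by
    intro n
    induction n with
    | zero => rw [hmu0]; norm_num
    | succ n ih =>
      rw [hmurec n]
      exact div_pos (mul_pos ih (hb_pos n)) (ha_pos (n+1) (Nat.succ_le_succ (Nat.zero_le n)))
  have hmub : ∀ n, mu n * b n = 1 := by
    intro n
    induction n with
    | zero => rw [hmu0, hb0]; norm_num
    | succ n ih =>
      have h1 : a (n+1) = b (n+1) := by
        rw [hai (n+1) (Nat.succ_le_succ (Nat.zero_le n)),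
          hbi (n+1) (Nat.succ_le_succ (Nat.zero_le n))]
      have h2 : a (n+1) ≠ 0 := ne_of_gt (ha_pos (n+1) (Nat.succ_le_succ (Nat.zero_le n)))
      rw [hmurec n]
      rw [← h1]
      field_simp
      linarith [ih]
  have hmu_nonneg : ∀ n, 0 ≤ mu n := fun n => le_of_lt (hmu_pos n)
  have hZ1 : (1:ℝ) ≤ Z := by
    rw [hZ]
    calc (1:ℝ) = mu 0 := hmu0.symm
    _ ≤ ∑' n, mu n := Summable.le_tsum hmusum 0 (fun j _ => hmu_nonneg j)
  have hZpos : (0:ℝ) < Z := lt_of_lt_of_le one_pos hZ1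
  have hZne : Z ≠ 0 := ne_of_gt hZpos
  have hpi_nonneg : ∀ i, 0 ≤ pi i := by
    intro i; rw [hpi i]; exact div_nonneg (hmu_nonneg i) (le_of_lt hZpos)
  have hpisum : Summable pi := by
    have := hmusum.div_const Z
    exact this.congr (fun i => (hpi i).symm)
  have hpitot : ∑' i, pi i = 1 := by
    have : ∑' i, pi i = (∑' i, mu i) / Z := by
      rw [← tsum_div_const]
      exact tsum_congr (fun i => hpi i)
    rw [this, ← hZ, div_self hZne]
  have hpib : ∀ i, pi i * b i = 1 / Z := by
    intro i
    rw [hpi i]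
    field_simp
    linear_combination hmub i
  have hmuf : ∀ n : ℕ, 1 ≤ n → mu n = (n:ℝ) ^ (-γ) := by
    intro n hn
    induction n with
    | zero => omega
    | succ n ih =>
      rcases Nat.eq_zero_or_pos n with h | h
      · subst h
        rw [hmurec 0, hmu0, hb0, hai 1 le_rfl]
        push_cast
        simp [Real.one_rpow]
      · have hnR : (0:ℝ) < (n:ℝ) := by exact_mod_cast h
        rw [hmurec n, ih h, hbi n h, hai (n+1) (Nat.succ_le_succ (Nat.zero_le n))]
        rw [Real.rpow_neg (le_of_lt hnR)]
        have hne : (n:ℝ) ^ γ ≠ 0 := ne_of_gt (Real.rpow_pos_of_pos hnR γ)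
        have h1 : ((n:ℝ) ^ γ)⁻¹ * (n:ℝ) ^ γ = 1 := inv_mul_cancel₀ hne
        push_cast
        rw [Real.rpow_neg (by positivity)]
        field_simp

  -- key membership lemma: trial functions f_i = min(i,n)
  have key : ∀ n : ℕ, 1 ≤ n → ∃ r ∈ S, r ≤ 4 * (2:ℝ)^γ * (n:ℝ)^(γ-2) := by
    intro n hn
    have hnR : (0:ℝ) < (n:ℝ) := by exact_mod_cast hn
    have hnR1 : (1:ℝ) ≤ (n:ℝ) := by exact_mod_cast hn
    set f : ℕ → ℝ := fun i => ((min i n : ℕ) : ℝ) with hf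
    have hf_nonneg : ∀ i, 0 ≤ f i := fun i => Nat.cast_nonneg _
    have hf_le : ∀ i, f i ≤ (n:ℝ) := by
      intro i
      have h : ((min i n : ℕ):ℝ) ≤ (n:ℝ) := by exact_mod_cast Nat.min_le_right i n
      simpa [hf] using h
    have hmsumf : Summable (fun i => pi i * f i) :=
      Summable.of_nonneg_of_le (fun i => mul_nonneg (hpi_nonneg i) (hf_nonneg i))
        (fun i => mul_le_mul_of_nonneg_left (hf_le i) (hpi_nonneg i)) (hpisum.mul_right (n:ℝ))
    have hqsumf : Summable (fun i => pi i * f i ^ 2) :=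
      Summable.of_nonneg_of_le (fun i => mul_nonneg (hpi_nonneg i) (sq_nonneg _))
        (fun i => mul_le_mul_of_nonneg_left
          (pow_le_pow_left₀ (hf_nonneg i) (hf_le i) 2) (hpi_nonneg i))
        (hpisum.mul_right ((n:ℝ)^2))
    set m := ∑' i, pi i * f i with hm
    set q := ∑' i, pi i * f i ^ 2 with hq
    have hm_nonneg : 0 ≤ m :=
      tsum_nonneg (fun i => mul_nonneg (hpi_nonneg i) (hf_nonneg i))
    set V := q - m^2 with hV
    have hsumV : Summable (fun i => pi i * (f i - m)^2) := by
      have h := (hqsumf.sub (hmsumf.mul_left (2*m))).add (hpisum.mul_left (m^2))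
      exact h.congr (fun i => by ring)
    have hVar : ∑' i, pi i * (f i - m)^2 = V := by
      have e : (fun i => pi i * (f i - m)^2)
          = fun i => (pi i * f i^2 - (2*m) * (pi i * f i)) + m^2 * pi i :=
        funext fun i => by ring
      rw [e, Summable.tsum_add (hqsumf.sub (hmsumf.mul_left (2*m))) (hpisum.mul_left (m^2)),
        Summable.tsum_sub hqsumf (hmsumf.mul_left (2*m)), tsum_mul_left, tsum_mul_left, hpitot,
        ← hm, ← hq, hV]
      ring
    have h2n1 : (1:ℝ) ≤ 2*(n:ℝ) := by linarith
    have h2npos : (0:ℝ) < 2*(n:ℝ) := by linarith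
    have hVlb : (n:ℝ)^3 * (2*(n:ℝ))^(-γ)/(4*Z) ≤ V := by
      rcases le_or_gt ((n:ℝ)/2) m with hcase | hcase
      · have h0 : pi 0 * (f 0 - m)^2 ≤ ∑' i, pi i * (f i - m)^2 :=
          Summable.le_tsum hsumV 0 (fun j _ => mul_nonneg (hpi_nonneg j) (sq_nonneg _))
        have hf0 : f 0 = 0 := by simp [hf]
        have hpi0 : pi 0 = 1/Z := by rw [hpi 0, hmu0]
        rw [hVar, hf0, hpi0] at h0
        have hm2 : (n:ℝ)^2/4 ≤ m^2 := by nlinarith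
        have hkey : (2*(n:ℝ))^(-γ) ≤ 1/(2*(n:ℝ)) := by
          have h1 := Real.rpow_le_rpow_of_exponent_le h2n1 (by linarith : -γ ≤ -1)
          rw [Real.rpow_neg_one] at h1
          rw [one_div]
          exact h1
        have hstep1 : (n:ℝ)^3 * (2*(n:ℝ))^(-γ)/(4*Z) ≤ (n:ℝ)^3 * (1/(2*(n:ℝ)))/(4*Z) := by
          gcongr
        have hstep2 : (n:ℝ)^3 * (1/(2*(n:ℝ)))/(4*Z) ≤ ((n:ℝ)^2/4)/Z := by
          rw [div_le_div_iff₀ (by positivity) hZpos]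
          have : (n:ℝ)^3 * (1/(2*(n:ℝ))) = (n:ℝ)^2/2 := by
            field_simp
          rw [this]
          nlinarith [sq_nonneg (n:ℝ), hZpos]
        have hstep3 : ((n:ℝ)^2/4)/Z ≤ V := by
          calc ((n:ℝ)^2/4)/Z ≤ m^2/Z := by gcongr
            _ = 1/Z * (0 - m)^2 := by ring
            _ ≤ V := h0
        linarith
      · -- m < n/2 : use mass on [n, 2n)
        have hsum_ge : ∑ j ∈ Finset.Ico n (2*n), pi j * (f j - m)^2
            ≤ ∑' i, pi i * (f i - m)^2 :=
          Summable.sum_le_tsum _ (fun j _ => mul_nonneg (hpi_nonneg j) (sq_nonneg _)) hsumV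
        have hterm : ∀ j ∈ Finset.Ico n (2*n),
            (2*(n:ℝ))^(-γ)/Z * ((n:ℝ)/2)^2 ≤ pi j * (f j - m)^2 := by
          intro j hj
          rw [Finset.mem_Ico] at hj
          have hj1 : 1 ≤ j := le_trans hn hj.1
          have hjR : (0:ℝ) < (j:ℝ) := by exact_mod_cast hj1
          have hfj : f j = (n:ℝ) := by
            have hmin : min j n = n := min_eq_right hj.1
            rw [hf]
            simp [hmin]
          have hpij : (2*(n:ℝ))^(-γ)/Z ≤ pi j := by
            rw [hpi j, hmuf j hj1]
            have hle : (j:ℝ) ≤ 2*(n:ℝ) := by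
              have h2 : (j:ℕ) ≤ 2*n := le_of_lt hj.2
              exact_mod_cast h2
            have hrp : (2*(n:ℝ))^(-γ) ≤ (j:ℝ)^(-γ) :=
              Real.rpow_le_rpow_of_nonpos hjR hle (by linarith : -γ ≤ 0)
            gcongr
          have hsq : ((n:ℝ)/2)^2 ≤ (f j - m)^2 := by
            rw [hfj]
            nlinarith
          calc (2*(n:ℝ))^(-γ)/Z * ((n:ℝ)/2)^2
              ≤ pi j * ((n:ℝ)/2)^2 := by
                apply mul_le_mul_of_nonneg_right hpij (by positivity)
            _ ≤ pi j * (f j - m)^2 := by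
                apply mul_le_mul_of_nonneg_left hsq (hpi_nonneg j)
        have hcard : (Finset.Ico n (2*n)).card = n := by
          rw [Nat.card_Ico]; omega
        have hconst : ∑ j ∈ Finset.Ico n (2*n), ((2*(n:ℝ))^(-γ)/Z * ((n:ℝ)/2)^2)
            ≤ ∑ j ∈ Finset.Ico n (2*n), pi j * (f j - m)^2 :=
          Finset.sum_le_sum hterm
        rw [Finset.sum_const, hcard, nsmul_eq_mul] at hconst
        rw [hVar] at hsum_ge
        have heq : (n:ℝ) * ((2*(n:ℝ))^(-γ)/Z * ((n:ℝ)/2)^2)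
            = (n:ℝ)^3 * (2*(n:ℝ))^(-γ)/(4*Z) := by
          field_simp
          ring
        linarith
    have hVpos : (0:ℝ) < V := by
      have : (0:ℝ) < (n:ℝ)^3 * (2*(n:ℝ))^(-γ)/(4*Z) := by
        have := Real.rpow_pos_of_pos h2npos (-γ)
        positivity
      linarith
    set σ := Real.sqrt V with hσ
    have hσpos : 0 < σ := Real.sqrt_pos.2 hVpos
    have hσne : σ ≠ 0 := ne_of_gt hσpos
    have hσ2 : σ^2 = V := Real.sq_sqrt hVpos.le
    set g : ℕ → ℝ := fun i => (f i - m)/σ with hg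
    have hVne : V ≠ 0 := ne_of_gt hVpos
    -- the difference terms
    have hdiff : ∀ i : ℕ, pi i * b i * (g (i+1) - g i)^2
        = if i < n then 1/(Z*V) else 0 := by
      intro i
      have hgd : g (i+1) - g i = (f (i+1) - f i)/σ := by
        rw [hg]; ring
      have hsq : (g (i+1) - g i)^2 = (f (i+1) - f i)^2 / V := by
        rw [hgd, div_pow, hσ2]
      by_cases hi : i < n
      · have h1 : f (i+1) - f i = 1 := by
          have e1 : min (i+1) n = i+1 := min_eq_left (by omega)
          have e2 : min i n = i := min_eq_left (by omega)
          rw [hf]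
          simp only [e1, e2]
          push_cast
          ring
        rw [hsq, h1, if_pos hi, hpib i]
        field_simp
      · have h1 : f (i+1) - f i = 0 := by
          have e1 : min (i+1) n = n := min_eq_right (by omega)
          have e2 : min i n = n := min_eq_right (by omega)
          rw [hf]
          simp only [e1, e2]
          ring
        rw [hsq, h1, if_neg hi]
        ring
    have hDsum : Summable (fun i => pi i * b i * (g (i+1) - g i)^2) := by
      apply (summable_of_ne_finset_zero (s := Finset.range n) _).congr
        (fun i => (hdiff i).symm)
      intro i hi
      rw [Finset.mem_range, not_lt] at hi
      exact if_neg (by omega)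
    have hDval : ∑' i, pi i * b i * (g (i+1) - g i)^2 = (n:ℝ)/(Z*V) := by
      rw [tsum_congr hdiff]
      rw [tsum_eq_sum (s := Finset.range n)
        (fun i hi => by
          rw [Finset.mem_range, not_lt] at hi
          exact if_neg (by omega))]
      have : ∀ i ∈ Finset.range n, (if i < n then 1/(Z*V) else 0) = 1/(Z*V) := by
        intro i hi
        rw [Finset.mem_range] at hi
        exact if_pos hi
      rw [Finset.sum_congr rfl this, Finset.sum_const, Finset.card_range, nsmul_eq_mul]
      ring
    refine ⟨(n:ℝ)/(Z*V), ⟨g, ?_, ?_, ?_, ?_, hDsum, hDval.symm⟩, ?_⟩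
    · -- summable pi * g
      have h := (hmsumf.sub (hpisum.mul_left m)).div_const σ
      exact h.congr (fun i => by rw [hg]; ring)
    · -- tsum pi * g = 0
      have e : (fun i => pi i * g i) = fun i => (pi i * f i - m * pi i)/σ :=
        funext fun i => by rw [hg]; ring
      rw [e, tsum_div_const, Summable.tsum_sub hmsumf (hpisum.mul_left m), tsum_mul_left, hpitot,
        ← hm]
      simp
    · -- summable pi * g^2
      have h := hsumV.div_const V
      exact h.congr (fun i => by
        rw [hg, div_pow, hσ2]
        ring)
    · -- tsum pi * g^2 = 1
      have e : (fun i => pi i * g i ^ 2) = fun i => (pi i * (f i - m)^2)/V :=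
        funext fun i => by rw [hg, div_pow, hσ2]; ring
      rw [e, tsum_div_const, hVar, div_self hVne]
    · -- the bound
      have hL : (0:ℝ) < (n:ℝ)^3 * (2*(n:ℝ))^(-γ)/(4*Z) := by
        have := Real.rpow_pos_of_pos h2npos (-γ)
        positivity
      have h1 : (n:ℝ)/(Z*V) ≤ (n:ℝ)/(Z*((n:ℝ)^3 * (2*(n:ℝ))^(-γ)/(4*Z))) := by
        gcongr
      have h2 : (n:ℝ)/(Z*((n:ℝ)^3 * (2*(n:ℝ))^(-γ)/(4*Z))) = 4 * (2:ℝ)^γ * (n:ℝ)^(γ-2) := by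
        have e1 : (2*(n:ℝ))^(-γ) = ((2:ℝ)^γ * (n:ℝ)^γ)⁻¹ := by
          rw [Real.rpow_neg h2npos.le, Real.mul_rpow (by norm_num) hnR.le]
        have e2 : (n:ℝ)^(γ-2) = (n:ℝ)^γ / (n:ℝ)^2 := by
          rw [Real.rpow_sub hnR]
          norm_num
        have h2γ : (0:ℝ) < (2:ℝ)^γ := Real.rpow_pos_of_pos (by norm_num) γ
        have hnγ : (0:ℝ) < (n:ℝ)^γ := Real.rpow_pos_of_pos hnR γ
        rw [e1, e2]
        field_simp
      rw [h2] at h1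
      exact h1

  have hbdd : BddBelow S := by
    refine ⟨0, fun r hr => ?_⟩
    obtain ⟨f, _, _, _, _, h5, h6⟩ := hr
    rw [h6]
    exact tsum_nonneg (fun i =>
      mul_nonneg (mul_nonneg (hpi_nonneg i) (hb_pos i).le) (sq_nonneg _))
  constructor
  · -- 0 < lam1 → 2 ≤ γ
    intro hpos
    by_contra hlt
    push_neg at hlt
    have hub : ∀ n : ℕ, 1 ≤ n → lam1 ≤ 4 * (2:ℝ)^γ * (n:ℝ)^(γ-2) := by
      intro n hn
      obtain ⟨r, hrS, hrle⟩ := key n hn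
      calc lam1 ≤ r := hlam1 ▸ csInf_le hbdd hrS
        _ ≤ _ := hrle
    have htend : Filter.Tendsto (fun n : ℕ => 4 * (2:ℝ)^γ * (n:ℝ)^(γ-2))
        Filter.atTop (nhds 0) := by
      have h1 : Filter.Tendsto (fun x : ℝ => x^(γ-2)) Filter.atTop (nhds 0) := by
        have h := tendsto_rpow_neg_atTop (y := 2-γ) (by linarith)
        simpa [neg_sub] using h
      have h2 := (h1.comp tendsto_natCast_atTop_atTop).const_mul (4 * (2:ℝ)^γ)
      simpa using h2
    have hle0 : lam1 ≤ 0 :=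
      ge_of_tendsto htend (Filter.eventually_atTop.2 ⟨1, fun n hn => hub n hn⟩)
    linarith
  · -- 2 ≤ γ → 0 < lam1
    intro hγ2
    rw [hlam1]
    have hne : S.Nonempty := by
      obtain ⟨r, hrS, _⟩ := key 1 le_rfl
      exact ⟨r, hrS⟩
    have hlow : ∀ r ∈ S, (1:ℝ)/4 ≤ r := by
      intro r hr
      obtain ⟨f, h1, h2, h3, h4, h5, h6⟩ := hr
      have hrnn : 0 ≤ r := by
        rw [h6]
        exact tsum_nonneg (fun i =>
          mul_nonneg (mul_nonneg (hpi_nonneg i) (hb_pos i).le) (sq_nonneg _))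
      have hu2sum : Summable (fun i => (f (i+1) - f i)^2) := by
        apply (h5.mul_left Z).congr
        intro i
        rw [hpib i]
        field_simp
      have hZr : ∑' i, (f (i+1) - f i)^2 = Z * r := by
        rw [h6, ← tsum_mul_left]
        apply tsum_congr
        intro i
        rw [hpib i]
        field_simp
      have hsumE : Summable (fun i => pi i * (f i - f 0)^2) := by
        have h := (h3.sub (h1.mul_left (2 * f 0))).add (hpisum.mul_left (f 0^2))
        exact h.congr (fun i => by ring)
      have hexp : ∑' i, pi i * (f i - f 0)^2 = 1 + f 0^2 := by
        have e : (fun i => pi i * (f i - f 0)^2)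
            = fun i => (pi i * f i^2 - (2 * f 0) * (pi i * f i)) + (f 0^2) * pi i :=
          funext fun i => by ring
        rw [e, Summable.tsum_add (h3.sub (h1.mul_left (2 * f 0))) (hpisum.mul_left (f 0^2)),
          Summable.tsum_sub h3 (h1.mul_left (2 * f 0)), tsum_mul_left, tsum_mul_left,
          hpitot, h4, h2]
        ring
      -- partial-sum bound via Hardy
      have hptl : ∀ N : ℕ, ∑ i ∈ Finset.range N, pi i * (f i - f 0)^2 ≤ 4 * r := by
        intro N
        cases N with
        | zero => simp; linarith
        | succ M =>
          rw [Finset.sum_range_succ' (fun i => pi i * (f i - f 0)^2) M]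
          have ht0 : pi 0 * (f 0 - f 0)^2 = 0 := by ring
          rw [ht0, add_zero]
          have hstep : ∀ i : ℕ, pi (i+1) * (f (i+1) - f 0)^2
              ≤ (1/Z) * ((∑ k ∈ Finset.range (i+1), |f (k+1) - f k|) / ((i:ℝ)+1))^2 := by
            intro i
            have hi0 : (0:ℝ) ≤ (i:ℝ) := Nat.cast_nonneg i
            have hi1 : (1:ℝ) ≤ ((i:ℕ)+1 : ℝ) := by linarith
            have hiR : (0:ℝ) < ((i:ℕ)+1 : ℝ) := by positivity
            have hmu_le : mu (i+1) ≤ 1/(((i:ℕ)+1:ℝ))^2 := by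
              rw [hmuf (i+1) (Nat.succ_le_succ (Nat.zero_le i))]
              push_cast
              have h := Real.rpow_le_rpow_of_exponent_le hi1 (by linarith : -γ ≤ -2)
              calc ((i:ℝ)+1)^(-γ) ≤ ((i:ℝ)+1)^(-(2:ℝ)) := h
                _ = 1/(((i:ℝ)+1))^2 := by
                    rw [Real.rpow_neg hiR.le, one_div]
                    norm_num
            have hfd : (f (i+1) - f 0)^2 ≤ (∑ k ∈ Finset.range (i+1), |f (k+1) - f k|)^2 := by
              have ht : f (i+1) - f 0 = ∑ k ∈ Finset.range (i+1), (f (k+1) - f k) :=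
                (Finset.sum_range_sub f (i+1)).symm
              have habs : |f (i+1) - f 0| ≤ ∑ k ∈ Finset.range (i+1), |f (k+1) - f k| := by
                rw [ht]
                exact Finset.abs_sum_le_sum_abs _ _
              calc (f (i+1) - f 0)^2 = |f (i+1) - f 0|^2 := (sq_abs _).symm
                _ ≤ (∑ k ∈ Finset.range (i+1), |f (k+1) - f k|)^2 := by
                    apply pow_le_pow_left₀ (abs_nonneg _) habs
            have hpile : pi (i+1) ≤ 1/((((i:ℕ)+1:ℝ))^2 * Z) := by
              rw [hpi (i+1)]
              rw [div_le_div_iff₀ hZpos (by positivity)]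
              calc mu (i+1) * ((((i:ℕ)+1:ℝ))^2 * Z) ≤ (1/(((i:ℕ)+1:ℝ))^2) * ((((i:ℕ)+1:ℝ))^2 * Z) := by
                    apply mul_le_mul_of_nonneg_right hmu_le (by positivity)
                _ = 1 * Z := by field_simp
            calc pi (i+1) * (f (i+1) - f 0)^2
                ≤ (1/((((i:ℕ)+1:ℝ))^2 * Z)) * (∑ k ∈ Finset.range (i+1), |f (k+1) - f k|)^2 := by
                  apply mul_le_mul hpile hfd (sq_nonneg _) (by positivity)
              _ = (1/Z) * ((∑ k ∈ Finset.range (i+1), |f (k+1) - f k|) / ((i:ℝ)+1))^2 := by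
                  rw [div_pow]
                  push_cast
                  field_simp
          calc ∑ i ∈ Finset.range M, pi (i+1) * (f (i+1) - f 0)^2
              ≤ ∑ i ∈ Finset.range M,
                  (1/Z) * ((∑ k ∈ Finset.range (i+1), |f (k+1) - f k|) / ((i:ℝ)+1))^2 :=
                Finset.sum_le_sum (fun i _ => hstep i)
            _ = (1/Z) * ∑ i ∈ Finset.range M,
                  ((∑ k ∈ Finset.range (i+1), |f (k+1) - f k|) / ((i:ℝ)+1))^2 := by
                rw [Finset.mul_sum]
            _ ≤ (1/Z) * (4 * ∑ k ∈ Finset.range M, |f (k+1) - f k|^2) := by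
                apply mul_le_mul_of_nonneg_left (hardy_finite (fun k => |f (k+1) - f k|) M)
                  (by positivity)
            _ = (4/Z) * ∑ k ∈ Finset.range M, (f (k+1) - f k)^2 := by
                have : ∀ k, |f (k+1) - f k|^2 = (f (k+1) - f k)^2 := fun k => sq_abs _
                rw [Finset.sum_congr rfl (fun k _ => this k)]
                ring
            _ ≤ (4/Z) * (Z * r) := by
                apply mul_le_mul_of_nonneg_left _ (by positivity)
                rw [← hZr]
                exact Summable.sum_le_tsum _ (fun k _ => sq_nonneg _) hu2sum
            _ = 4 * r := by
                field_simp
      have hfin : 1 + f 0^2 ≤ 4 * r := by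
        rw [← hexp]
        exact Real.tsum_le_of_sum_range_le
          (fun i => mul_nonneg (hpi_nonneg i) (sq_nonneg _)) hptl
      nlinarith [sq_nonneg (f 0)]
    calc (0:ℝ) < 1/4 := by norm_num
      _ ≤ sInf S := le_csInf hne hlow
end
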